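/- arXiv:2002.06808 — 4 statements merged into one kernel-verified Lean document; each statement's English description precedes it below -/
import Mathlib

section
/- Each Riccati iterate K_t(r) is symmetric positive semidefinite (so γ bᵀK_t(r) b + r > 0 and the recursion is well defined), the Bellman iterates v_t := T^t 0 starting from the zero function v₀ ≡ 0 are well-defined elements of V, and for every t ≥ 0, x ∈ ℝ^d and r > 0 one has the closed form (T^{t+1} 0)(x,r) = xᵀK_t(r) x + Σ_{m=0}^{t−1} γ^{t−m} ∫ nᵀK_m(r) n dμ(n). -/
open MeasureTheory Matrix Filter

noncomputable section

/-- The weighted sup-norm `‖v‖ = sup_{(x,r) ∈ S} |v(x,r)| / (max(‖(x,r)‖₂,1))²` on functions on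
`S = ℝ^d × (0,∞)` (the `r`-argument is curried; only `r > 0` matters). -/
def normV {d : ℕ} (v : (Fin d → ℝ) → ℝ → ℝ) : ENNReal :=
  ⨆ (x : Fin d → ℝ) (r : Set.Ioi (0 : ℝ)),
    ENNReal.ofReal (|v x r.1| / (max (Real.sqrt ((∑ i, x i ^ 2) + r.1 ^ 2)) 1) ^ 2)

/-- The Bellman operator
`(Tv)(x,r) = xᵀQx + inf_u ( r u² + γ ∫ v(Ax + b u + n, r) dμ(n) )`. -/
def bellmanT {d : ℕ} (A Q : Matrix (Fin d) (Fin d) ℝ) (b : Fin d → ℝ) (γ : ℝ)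
    (μ : Measure (Fin d → ℝ)) (v : (Fin d → ℝ) → ℝ → ℝ) : (Fin d → ℝ) → ℝ → ℝ :=
  fun x r => x ⬝ᵥ Q.mulVec x +
    ⨅ u : ℝ, (r * u ^ 2 + γ * ∫ n, v (A.mulVec x + u • b + n) r ∂μ)

/-- One step of the Riccati recursion with control penalty `r`:
`K ↦ Q + Aᵀ( γK − (γ²/(γ bᵀK b + r)) K b bᵀ K )A`. -/
def riccatiStep {d : ℕ} (A Q : Matrix (Fin d) (Fin d) ℝ) (b : Fin d → ℝ) (γ r : ℝ)
    (K : Matrix (Fin d) (Fin d) ℝ) : Matrix (Fin d) (Fin d) ℝ :=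
  Q + Aᵀ * (γ • K - (γ ^ 2 / (γ * (b ⬝ᵥ K.mulVec b) + r)) • (K * vecMulVec b b * K)) * A

/-- The Riccati iterates `K_0(r) = Q`, `K_{t+1}(r) = riccatiStep K_t(r)`. -/
def riccatiIter {d : ℕ} (A Q : Matrix (Fin d) (Fin d) ℝ) (b : Fin d → ℝ) (γ r : ℝ)
    (t : ℕ) : Matrix (Fin d) (Fin d) ℝ :=
  (riccatiStep A Q b γ r)^[t] Q

namespace BellmanAux


variable {d : ℕ}

lemma abs_le_one_add_sq (a : ℝ) : |a| ≤ 1 + a ^ 2 := by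
  nlinarith [sq_nonneg (|a| - 1), sq_abs a, abs_nonneg a]

lemma sq_le_sum (x : Fin d → ℝ) (i : Fin d) : x i ^ 2 ≤ ∑ k, x k ^ 2 :=
  Finset.single_le_sum (fun k _ => sq_nonneg (x k)) (Finset.mem_univ i)

lemma abs_mul_abs_le_sum (x : Fin d → ℝ) (i j : Fin d) : |x i| * |x j| ≤ ∑ k, x k ^ 2 := by
  nlinarith [sq_nonneg (|x i| - |x j|), sq_abs (x i), sq_abs (x j), sq_le_sum x i, sq_le_sum x j]

lemma dot_trans (A : Matrix (Fin d) (Fin d) ℝ) (x w : Fin d → ℝ) :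
    x ⬝ᵥ (Aᵀ.mulVec w) = (A.mulVec x) ⬝ᵥ w := by
  rw [Matrix.mulVec_transpose, dotProduct_comm, ← Matrix.dotProduct_mulVec]
  exact dotProduct_comm _ _

lemma dot_symm {K : Matrix (Fin d) (Fin d) ℝ} (hK : Kᵀ = K) (x y : Fin d → ℝ) :
    x ⬝ᵥ K.mulVec y = y ⬝ᵥ K.mulVec x := by
  conv_lhs => rw [← hK]
  rw [dot_trans]
  exact dotProduct_comm _ _

lemma vecMulVec_mulVec' (w v x : Fin d → ℝ) :
    (Matrix.vecMulVec w v).mulVec x = (v ⬝ᵥ x) • w := by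
  funext i
  simp only [Matrix.mulVec, Matrix.vecMulVec_apply, dotProduct, Pi.smul_apply,
    smul_eq_mul, Finset.sum_mul, Finset.mul_sum]
  refine Finset.sum_congr rfl fun j _ => by ring

lemma conj_quad (A M : Matrix (Fin d) (Fin d) ℝ) (x : Fin d → ℝ) :
    x ⬝ᵥ (Aᵀ * M * A).mulVec x = (A.mulVec x) ⬝ᵥ M.mulVec (A.mulVec x) := by
  rw [Matrix.mul_assoc, ← Matrix.mulVec_mulVec, dot_trans, Matrix.mulVec_mulVec]

lemma psd_transpose_eq {K : Matrix (Fin d) (Fin d) ℝ} (hK : K.PosSemidef) : Kᵀ = K := by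
  have h := hK.1
  rwa [Matrix.IsHermitian, Matrix.conjTranspose_eq_transpose_of_trivial] at h

lemma psd_nonneg {K : Matrix (Fin d) (Fin d) ℝ} (hK : K.PosSemidef) (x : Fin d → ℝ) :
    0 ≤ x ⬝ᵥ K.mulVec x := by
  have := hK.dotProduct_mulVec_nonneg x
  simpa using this

lemma cs {K : Matrix (Fin d) (Fin d) ℝ} (hK : K.PosSemidef) (x y : Fin d → ℝ) :
    (x ⬝ᵥ K.mulVec y) ^ 2 ≤ (x ⬝ᵥ K.mulVec x) * (y ⬝ᵥ K.mulVec y) := by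
  have hsym := psd_transpose_eq hK
  have key : ∀ t : ℝ, 0 ≤ (y ⬝ᵥ K.mulVec y) * (t * t) + (2 * (x ⬝ᵥ K.mulVec y)) * t
      + (x ⬝ᵥ K.mulVec x) := by
    intro t
    have h := psd_nonneg hK (x + t • y)
    have hxy := dot_symm hsym y x
    simp only [Matrix.mulVec_add, dotProduct_add, add_dotProduct,
      Matrix.mulVec_smul, dotProduct_smul, smul_dotProduct, smul_eq_mul] at h
    rw [hxy] at h
    ring_nf at h ⊢
    linarith [h]
  have hd := discrim_le_zero key
  rw [discrim] at hd
  nlinarith [hd]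

lemma quad_abs_le (K : Matrix (Fin d) (Fin d) ℝ) (x : Fin d → ℝ) :
    |x ⬝ᵥ K.mulVec x| ≤ (∑ i, ∑ j, |K i j|) * ∑ k, x k ^ 2 := by
  simp only [dotProduct, Matrix.mulVec]
  calc |∑ i, x i * ∑ j, K i j * x j| ≤ ∑ i, |x i * ∑ j, K i j * x j| :=
        Finset.abs_sum_le_sum_abs _ _
    _ ≤ ∑ i, ∑ j, |x i * (K i j * x j)| := by
        refine Finset.sum_le_sum fun i _ => ?_
        rw [abs_mul]
        calc |x i| * |∑ j, K i j * x j| ≤ |x i| * ∑ j, |K i j * x j| := by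
              gcongr
              exact Finset.abs_sum_le_sum_abs _ _
          _ = ∑ j, |x i * (K i j * x j)| := by
              rw [Finset.mul_sum]
              exact Finset.sum_congr rfl fun j _ => by rw [← abs_mul]
    _ ≤ ∑ i, ∑ j, |K i j| * ∑ k, x k ^ 2 := by
        refine Finset.sum_le_sum fun i _ => Finset.sum_le_sum fun j _ => ?_
        have h := abs_mul_abs_le_sum x i j
        have : |x i * (K i j * x j)| = |K i j| * (|x i| * |x j|) := by
          rw [abs_mul, abs_mul]; ring
        rw [this]
        exact mul_le_mul_of_nonneg_left h (abs_nonneg _)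
    _ = (∑ i, ∑ j, |K i j|) * ∑ k, x k ^ 2 := by
        rw [Finset.sum_mul]
        exact Finset.sum_congr rfl fun i _ => by rw [Finset.sum_mul]

lemma iInf_quadratic (a β c : ℝ) (ha : 0 < a) :
    ⨅ u : ℝ, (a * u ^ 2 + β * u + c) = c - β ^ 2 / (4 * a) := by
  have key : ∀ u : ℝ, a * u ^ 2 + β * u + c = a * (u + β / (2 * a)) ^ 2 + (c - β ^ 2 / (4 * a)) := by
    intro u; field_simp; ring
  have hbdd : BddBelow (Set.range fun u : ℝ => a * u ^ 2 + β * u + c) := by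
    refine ⟨c - β ^ 2 / (4 * a), ?_⟩
    rintro _ ⟨u, rfl⟩
    show c - β ^ 2 / (4 * a) ≤ a * u ^ 2 + β * u + c
    rw [key u]
    nlinarith [mul_nonneg ha.le (sq_nonneg (u + β / (2 * a)))]
  apply le_antisymm
  · refine (ciInf_le hbdd (-(β / (2 * a)))).trans_eq ?_
    show a * (-(β / (2 * a))) ^ 2 + β * (-(β / (2 * a))) + c = _
    field_simp
    ring
  · refine le_ciInf fun u => ?_
    show c - β ^ 2 / (4 * a) ≤ a * u ^ 2 + β * u + c
    rw [key u]
    nlinarith [mul_nonneg ha.le (sq_nonneg (u + β / (2 * a)))]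

variable {μ : Measure (Fin d → ℝ)} [IsProbabilityMeasure μ]

lemma integrable_coord (hmom : Integrable (fun n => ∑ i, (n i) ^ 2) μ) (j : Fin d) :
    Integrable (fun n => n j) μ := by
  refine ((integrable_const (1 : ℝ)).add hmom).mono'
    (measurable_pi_apply j).aestronglyMeasurable (ae_of_all _ fun n => ?_)
  simp only [Real.norm_eq_abs]
  calc |n j| ≤ 1 + n j ^ 2 := abs_le_one_add_sq _
    _ ≤ 1 + ∑ i, n i ^ 2 := by linarith [sq_le_sum n j]

lemma continuous_quad (K : Matrix (Fin d) (Fin d) ℝ) :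
    Continuous fun n : Fin d → ℝ => n ⬝ᵥ K.mulVec n := by
  simp only [dotProduct, Matrix.mulVec]
  fun_prop

lemma integrable_quad (hmom : Integrable (fun n => ∑ i, (n i) ^ 2) μ)
    (K : Matrix (Fin d) (Fin d) ℝ) : Integrable (fun n => n ⬝ᵥ K.mulVec n) μ := by
  refine (hmom.const_mul (∑ i, ∑ j, |K i j|)).mono'
    (continuous_quad K).aestronglyMeasurable (ae_of_all _ fun n => ?_)
  calc ‖n ⬝ᵥ K.mulVec n‖ = |n ⬝ᵥ K.mulVec n| := rfl
    _ ≤ (∑ i, ∑ j, |K i j|) * ∑ k, n k ^ 2 := quad_abs_le K n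

lemma integrable_linear (hmom : Integrable (fun n => ∑ i, (n i) ^ 2) μ) (w : Fin d → ℝ) :
    Integrable (fun n => w ⬝ᵥ n) μ := by
  simp only [dotProduct]
  exact integrable_finset_sum _ fun j _ => (integrable_coord hmom j).const_mul (w j)

lemma integral_linear (hmom : Integrable (fun n => ∑ i, (n i) ^ 2) μ)
    (hmean : ∀ i, ∫ n, n i ∂μ = 0) (w : Fin d → ℝ) : ∫ n, w ⬝ᵥ n ∂μ = 0 := by
  simp only [dotProduct]
  rw [integral_finset_sum _ fun j _ => (integrable_coord hmom j).const_mul (w j)]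
  simp [MeasureTheory.integral_const_mul, hmean]

lemma integral_quad_shift (hmom : Integrable (fun n => ∑ i, (n i) ^ 2) μ)
    (hmean : ∀ i, ∫ n, n i ∂μ = 0) {K : Matrix (Fin d) (Fin d) ℝ} (hK : Kᵀ = K)
    (y : Fin d → ℝ) (c : ℝ) :
    ∫ n, ((y + n) ⬝ᵥ K.mulVec (y + n) + c) ∂μ
      = y ⬝ᵥ K.mulVec y + (∫ n, n ⬝ᵥ K.mulVec n ∂μ) + c := by
  have expand : ∀ n : Fin d → ℝ, (y + n) ⬝ᵥ K.mulVec (y + n) + c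
      = ((2 : ℝ) • K.mulVec y) ⬝ᵥ n + (n ⬝ᵥ K.mulVec n + (y ⬝ᵥ K.mulVec y + c)) := by
    intro n
    have h1 : y ⬝ᵥ K.mulVec n = (K.mulVec y) ⬝ᵥ n := by
      rw [dot_symm hK]; exact dotProduct_comm _ _
    have h2 : n ⬝ᵥ K.mulVec y = (K.mulVec y) ⬝ᵥ n := dotProduct_comm _ _
    simp only [Matrix.mulVec_add, dotProduct_add, add_dotProduct,
      smul_dotProduct, smul_eq_mul]
    rw [h1, h2]; ring
  simp_rw [expand]
  have h1 : Integrable (fun n : Fin d → ℝ => ((2 : ℝ) • K.mulVec y) ⬝ᵥ n) μ :=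
    integrable_linear hmom _
  have h2 : Integrable (fun n : Fin d → ℝ => n ⬝ᵥ K.mulVec n + (y ⬝ᵥ K.mulVec y + c)) μ :=
    (integrable_quad hmom K).add (integrable_const _)
  rw [integral_add h1 h2, integral_add (integrable_quad hmom K) (integrable_const _),
    integral_linear hmom hmean, integral_const]
  simp [measure_univ]
  ring


end BellmanAux

namespace BellmanAux

variable {d : ℕ}

set_option maxHeartbeats 1000000 in
lemma quad_riccatiStep (A Q : Matrix (Fin d) (Fin d) ℝ) (b : Fin d → ℝ) (γ r : ℝ)
    {K : Matrix (Fin d) (Fin d) ℝ} (hKs : Kᵀ = K) (x : Fin d → ℝ) :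
    x ⬝ᵥ (riccatiStep A Q b γ r K).mulVec x
      = x ⬝ᵥ Q.mulVec x + γ * ((A.mulVec x) ⬝ᵥ K.mulVec (A.mulVec x))
        - γ ^ 2 / (γ * (b ⬝ᵥ K.mulVec b) + r) * (b ⬝ᵥ K.mulVec (A.mulVec x)) ^ 2 := by
  simp only [riccatiStep]
  rw [Matrix.add_mulVec, dotProduct_add, conj_quad]
  rw [Matrix.sub_mulVec, dotProduct_sub, Matrix.smul_mulVec,
    dotProduct_smul, Matrix.smul_mulVec, dotProduct_smul]
  rw [← Matrix.mulVec_mulVec, ← Matrix.mulVec_mulVec, vecMulVec_mulVec', Matrix.mulVec_smul,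
    dotProduct_smul]
  rw [dot_symm hKs (A.mulVec x) b]
  simp only [smul_eq_mul]
  ring

lemma riccati_psd {A Q : Matrix (Fin d) (Fin d) ℝ} {b : Fin d → ℝ} {γ r : ℝ}
    (hQ : Q.PosSemidef) (hγ0 : 0 < γ) (hr : 0 < r) (t : ℕ) :
    (riccatiIter A Q b γ r t).PosSemidef ∧
      0 < γ * (b ⬝ᵥ (riccatiIter A Q b γ r t).mulVec b) + r := by
  induction t with
  | zero =>
    refine ⟨hQ, ?_⟩
    have := psd_nonneg hQ b
    simp only [riccatiIter, Function.iterate_zero, id_eq]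
    nlinarith
  | succ t ih =>
    obtain ⟨hK, hs⟩ := ih
    have hKs : (riccatiIter A Q b γ r t)ᵀ = riccatiIter A Q b γ r t := psd_transpose_eq hK
    set K := riccatiIter A Q b γ r t with hKdef
    have hit : riccatiIter A Q b γ r (t + 1) = riccatiStep A Q b γ r K :=
      Function.iterate_succ_apply' _ _ _
    have hBs : (vecMulVec b b)ᵀ = vecMulVec b b := by
      ext i j; simp [Matrix.vecMulVec_apply, Matrix.transpose_apply, mul_comm]
    have hpsd : (riccatiStep A Q b γ r K).PosSemidef := by
      apply Matrix.PosSemidef.of_dotProduct_mulVec_nonneg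
      · rw [Matrix.IsHermitian, Matrix.conjTranspose_eq_transpose_of_trivial]
        simp only [riccatiStep, Matrix.transpose_add, Matrix.transpose_mul,
          Matrix.transpose_smul, Matrix.transpose_sub, Matrix.transpose_transpose,
          hKs, hBs, psd_transpose_eq hQ, Matrix.mul_assoc]
      · intro x
        have hx : star x = x := by funext i; exact star_trivial _
        rw [hx, quad_riccatiStep A Q b γ r hKs x]
        set z := A.mulVec x
        have hq0 := psd_nonneg hQ x
        have hz := psd_nonneg hK z
        have hqb := psd_nonneg hK b
        have hcs := cs hK b z
        have hc0 : 0 ≤ γ ^ 2 / (γ * (b ⬝ᵥ K.mulVec b) + r) := div_nonneg (sq_nonneg γ) hs.le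
        have h1 : γ ^ 2 / (γ * (b ⬝ᵥ K.mulVec b) + r) * (b ⬝ᵥ K.mulVec z) ^ 2
            ≤ γ ^ 2 / (γ * (b ⬝ᵥ K.mulVec b) + r) * ((b ⬝ᵥ K.mulVec b) * (z ⬝ᵥ K.mulVec z)) :=
          mul_le_mul_of_nonneg_left hcs hc0
        have h2 : γ ^ 2 / (γ * (b ⬝ᵥ K.mulVec b) + r) * ((b ⬝ᵥ K.mulVec b) * (z ⬝ᵥ K.mulVec z))
            ≤ γ * (z ⬝ᵥ K.mulVec z) := by
          rw [div_mul_eq_mul_div, div_le_iff₀ hs]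
          nlinarith [mul_nonneg (mul_nonneg hγ0.le hz) hr.le]
        linarith
    refine ⟨by rwa [hit], ?_⟩
    have := psd_nonneg hpsd b
    rw [hit]
    nlinarith

/-- Iterates of the r-independent comparison recursion `M ↦ Q + γ Aᵀ M A`. -/
def lmat (A Q : Matrix (Fin d) (Fin d) ℝ) (γ : ℝ) (t : ℕ) : Matrix (Fin d) (Fin d) ℝ :=
  (fun M => Q + γ • (Aᵀ * M * A))^[t] Q

lemma riccati_le_lmat {A Q : Matrix (Fin d) (Fin d) ℝ} {b : Fin d → ℝ} {γ r : ℝ}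
    (hQ : Q.PosSemidef) (hγ0 : 0 < γ) (hr : 0 < r) :
    ∀ t (x : Fin d → ℝ), x ⬝ᵥ (riccatiIter A Q b γ r t).mulVec x
      ≤ x ⬝ᵥ (lmat A Q γ t).mulVec x := by
  intro t
  induction t with
  | zero => intro x; simp [riccatiIter, lmat]
  | succ t ih =>
    intro x
    obtain ⟨hK, hs⟩ := riccati_psd hQ hγ0 hr t
    have hKs := psd_transpose_eq hK
    have hit : riccatiIter A Q b γ r (t + 1) = riccatiStep A Q b γ r (riccatiIter A Q b γ r t) :=
      Function.iterate_succ_apply' _ _ _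
    have hlt : lmat A Q γ (t + 1) = Q + γ • (Aᵀ * lmat A Q γ t * A) :=
      Function.iterate_succ_apply' _ _ _
    rw [hit, hlt, quad_riccatiStep A Q b γ r hKs x, Matrix.add_mulVec, dotProduct_add,
      Matrix.smul_mulVec, dotProduct_smul, conj_quad, smul_eq_mul]
    have h1 : 0 ≤ γ ^ 2 / (γ * (b ⬝ᵥ (riccatiIter A Q b γ r t).mulVec b) + r)
        * (b ⬝ᵥ (riccatiIter A Q b γ r t).mulVec (A.mulVec x)) ^ 2 :=
      mul_nonneg (div_nonneg (sq_nonneg γ) hs.le) (sq_nonneg _)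
    have h2 := ih (A.mulVec x)
    nlinarith

end BellmanAux

/-- Each Riccati iterate `K_t(r)` is symmetric positive semidefinite (so
`γ bᵀK_t(r) b + r > 0`), the Bellman iterates `T^t 0` are well-defined elements of `V`, and for
every `t`, `x` and `r > 0`,
`(T^{t+1} 0)(x,r) = xᵀK_t(r) x + Σ_{m=0}^{t−1} γ^{t−m} ∫ nᵀK_m(r) n dμ(n)`. -/
theorem bellman_iterates_closed_form
    (d : ℕ) (hd : 1 ≤ d)
    (A Q : Matrix (Fin d) (Fin d) ℝ) (b : Fin d → ℝ) (hQ : Q.PosSemidef)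
    (γ : ℝ) (hγ : γ ∈ Set.Ioo (0 : ℝ) 1)
    (μ : Measure (Fin d → ℝ)) [IsProbabilityMeasure μ]
    (hmean : ∀ i, ∫ n, n i ∂μ = 0)
    (hmom : Integrable (fun n => ∑ i, (n i) ^ 2) μ) :
    -- positive semidefiniteness of the Riccati iterates, and positivity of the denominator
    (∀ r > (0 : ℝ), ∀ t : ℕ, (riccatiIter A Q b γ r t).PosSemidef ∧
      0 < γ * (b ⬝ᵥ (riccatiIter A Q b γ r t).mulVec b) + r) ∧
    -- the Bellman iterates starting from the zero function lie in V
    (∀ t : ℕ, normV ((bellmanT A Q b γ μ)^[t] (fun _ _ => 0)) < ⊤) ∧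
    -- closed form of the Bellman iterates
    (∀ t : ℕ, ∀ x : Fin d → ℝ, ∀ r > (0 : ℝ),
      ((bellmanT A Q b γ μ)^[t + 1] (fun _ _ => 0)) x r =
        x ⬝ᵥ (riccatiIter A Q b γ r t).mulVec x +
          ∑ m ∈ Finset.range t,
            γ ^ (t - m) * ∫ n, n ⬝ᵥ (riccatiIter A Q b γ r m).mulVec n ∂μ) := by
  obtain ⟨hγ0, hγ1⟩ := hγ
  have hpsd : ∀ r > (0 : ℝ), ∀ t : ℕ, (riccatiIter A Q b γ r t).PosSemidef ∧
      0 < γ * (b ⬝ᵥ (riccatiIter A Q b γ r t).mulVec b) + r :=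
    fun r hr t => BellmanAux.riccati_psd hQ hγ0 hr t
  have hclosed : ∀ t : ℕ, ∀ x : Fin d → ℝ, ∀ r : ℝ, 0 < r →
      ((bellmanT A Q b γ μ)^[t + 1] (fun _ _ => 0)) x r =
        x ⬝ᵥ (riccatiIter A Q b γ r t).mulVec x +
          ∑ m ∈ Finset.range t,
            γ ^ (t - m) * ∫ n, n ⬝ᵥ (riccatiIter A Q b γ r m).mulVec n ∂μ := by
    intro t
    induction t with
    | zero =>
      intro x r hr
      have h0 : (bellmanT A Q b γ μ)^[0 + 1] (fun _ _ => 0) x r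
          = x ⬝ᵥ Q.mulVec x + ⨅ u : ℝ, (r * u ^ 2 + γ * ∫ _n, (0 : ℝ) ∂μ) := rfl
      rw [h0]
      have hkey : ∀ u : ℝ, r * u ^ 2 + γ * ∫ _n, (0 : ℝ) ∂μ = r * u ^ 2 + 0 * u + 0 := by
        intro u; rw [integral_zero]; ring
      rw [iInf_congr hkey, BellmanAux.iInf_quadratic r 0 0 hr]
      simp [riccatiIter]
    | succ t ih =>
      intro x r hr
      obtain ⟨hK, hs⟩ := hpsd r hr t
      have hKs : (riccatiIter A Q b γ r t)ᵀ = riccatiIter A Q b γ r t :=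
        BellmanAux.psd_transpose_eq hK
      set K := riccatiIter A Q b γ r t with hKdef
      set c := ∑ m ∈ Finset.range t,
          γ ^ (t - m) * ∫ n, n ⬝ᵥ (riccatiIter A Q b γ r m).mulVec n ∂μ with hcdef
      set I := ∫ n, n ⬝ᵥ K.mulVec n ∂μ with hIdef
      set z := A.mulVec x with hzdef
      rw [Function.iterate_succ_apply']
      show x ⬝ᵥ Q.mulVec x + (⨅ u : ℝ, (r * u ^ 2 +
          γ * ∫ n, ((bellmanT A Q b γ μ)^[t + 1] (fun _ _ => 0)) (A.mulVec x + u • b + n) r ∂μ)) = _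
      have hkey : ∀ u : ℝ,
          r * u ^ 2 + γ * ∫ n,
              ((bellmanT A Q b γ μ)^[t + 1] (fun _ _ => 0)) (A.mulVec x + u • b + n) r ∂μ
            = (γ * (b ⬝ᵥ K.mulVec b) + r) * u ^ 2 + (2 * γ * (b ⬝ᵥ K.mulVec z)) * u
              + γ * (z ⬝ᵥ K.mulVec z + I + c) := by
        intro u
        have h2 : ∀ n : Fin d → ℝ,
            ((bellmanT A Q b γ μ)^[t + 1] (fun _ _ => 0)) (A.mulVec x + u • b + n) r
              = ((z + u • b) + n) ⬝ᵥ K.mulVec ((z + u • b) + n) + c := fun n => ih _ r hr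
        have h1 : ∫ n,
            ((bellmanT A Q b γ μ)^[t + 1] (fun _ _ => 0)) (A.mulVec x + u • b + n) r ∂μ
              = (z + u • b) ⬝ᵥ K.mulVec (z + u • b) + I + c := by
          simp_rw [h2]
          exact BellmanAux.integral_quad_shift hmom hmean hKs (z + u • b) c
        rw [h1]
        have hb1 : z ⬝ᵥ K.mulVec b = b ⬝ᵥ K.mulVec z := BellmanAux.dot_symm hKs z b
        simp only [Matrix.mulVec_add, dotProduct_add, add_dotProduct,
          Matrix.mulVec_smul, dotProduct_smul, smul_dotProduct, smul_eq_mul]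
        rw [hb1]
        ring
      rw [iInf_congr hkey, BellmanAux.iInf_quadratic _ _ _ hs]
      have hit : riccatiIter A Q b γ r (t + 1) = riccatiStep A Q b γ r K :=
        Function.iterate_succ_apply' _ _ _
      rw [hit, BellmanAux.quad_riccatiStep A Q b γ r hKs x, ← hzdef]
      rw [Finset.sum_range_succ]
      have hsum : ∑ m ∈ Finset.range t,
          γ ^ (t + 1 - m) * ∫ n, n ⬝ᵥ (riccatiIter A Q b γ r m).mulVec n ∂μ = γ * c := by
        rw [hcdef, Finset.mul_sum]
        refine Finset.sum_congr rfl fun m hm => ?_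
        have hm' : m < t := Finset.mem_range.mp hm
        have he : t + 1 - m = (t - m) + 1 := by omega
        rw [he, pow_succ]
        ring
      rw [hsum]
      have h1t : t + 1 - t = 1 := by omega
      rw [h1t, pow_one, ← hKdef, ← hIdef]
      have hane : γ * (b ⬝ᵥ K.mulVec b) + r ≠ 0 := ne_of_gt hs
      field_simp
      ring
  have hnormV : ∀ t : ℕ, normV ((bellmanT A Q b γ μ)^[t] (fun _ _ => 0)) < ⊤ := by
    have hgen : ∀ (v : (Fin d → ℝ) → ℝ → ℝ) (B : ℝ),
        (∀ x r, 0 < r → |v x r| ≤ B * ((∑ i, x i ^ 2) + 1)) → normV v < ⊤ := by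
      intro v B h
      have hB : 0 ≤ B := by
        have h0 := h 0 1 one_pos
        have h1 : (0 : ℝ) ≤ B * ((∑ _i : Fin d, (0 : ℝ) ^ 2) + 1) :=
          le_trans (abs_nonneg _) h0
        simpa using h1
      refine lt_of_le_of_lt (b := ENNReal.ofReal (2 * B)) ?_ ENNReal.ofReal_lt_top
      rw [normV]
      refine iSup_le fun x => iSup_le fun r => ?_
      apply ENNReal.ofReal_le_ofReal
      set S := ∑ i, x i ^ 2 with hS
      set M := max (Real.sqrt (S + r.1 ^ 2)) 1 with hM
      have hS0 : 0 ≤ S := Finset.sum_nonneg fun i _ => sq_nonneg _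
      have hM1 : (1 : ℝ) ≤ M := le_max_right _ _
      have hM0 : (0 : ℝ) < M := lt_of_lt_of_le one_pos hM1
      have hMsq : S + r.1 ^ 2 ≤ M ^ 2 := by
        have h1 : Real.sqrt (S + r.1 ^ 2) ≤ M := le_max_left _ _
        have h2 : Real.sqrt (S + r.1 ^ 2) ^ 2 = S + r.1 ^ 2 := Real.sq_sqrt (by positivity)
        nlinarith [Real.sqrt_nonneg (S + r.1 ^ 2)]
      have hle : S + 1 ≤ 2 * M ^ 2 := by nlinarith [sq_nonneg r.1]
      rw [div_le_iff₀ (by positivity)]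
      have hv := h x r.1 (Set.mem_Ioi.mp r.2)
      calc |v x r.1| ≤ B * (S + 1) := hv
        _ ≤ B * (2 * M ^ 2) := mul_le_mul_of_nonneg_left hle hB
        _ = 2 * B * M ^ 2 := by ring
    intro t
    cases t with
    | zero =>
      refine hgen _ 0 fun x r hr => ?_
      simp
    | succ t =>
      set J := ∫ n, ∑ i, n i ^ 2 ∂μ with hJ
      have hJ0 : 0 ≤ J := integral_nonneg fun n => Finset.sum_nonneg fun i _ => sq_nonneg _
      set C : ℕ → ℝ := fun m => ∑ i, ∑ j, |BellmanAux.lmat A Q γ m i j| with hCdef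
      have hC0 : ∀ m, 0 ≤ C m := fun m => Finset.sum_nonneg fun i _ =>
        Finset.sum_nonneg fun j _ => abs_nonneg _
      have hD0 : 0 ≤ ∑ m ∈ Finset.range t, C m * J :=
        Finset.sum_nonneg fun m _ => mul_nonneg (hC0 m) hJ0
      refine hgen _ (C t + ∑ m ∈ Finset.range t, C m * J) fun x r hr => ?_
      rw [hclosed t x r hr]
      obtain ⟨hKt, _⟩ := hpsd r hr t
      have hq1 : 0 ≤ x ⬝ᵥ (riccatiIter A Q b γ r t).mulVec x := BellmanAux.psd_nonneg hKt x
      have hq2 : x ⬝ᵥ (riccatiIter A Q b γ r t).mulVec x ≤ C t * (∑ i, x i ^ 2) :=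
        (BellmanAux.riccati_le_lmat hQ hγ0 hr t x).trans
          (le_of_abs_le (BellmanAux.quad_abs_le _ x))
      have hsum1 : 0 ≤ ∑ m ∈ Finset.range t,
          γ ^ (t - m) * ∫ n, n ⬝ᵥ (riccatiIter A Q b γ r m).mulVec n ∂μ := by
        refine Finset.sum_nonneg fun m _ => mul_nonneg (pow_nonneg hγ0.le _) ?_
        exact integral_nonneg fun n => BellmanAux.psd_nonneg (hpsd r hr m).1 n
      have hsum2 : (∑ m ∈ Finset.range t,
            γ ^ (t - m) * ∫ n, n ⬝ᵥ (riccatiIter A Q b γ r m).mulVec n ∂μ)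
          ≤ ∑ m ∈ Finset.range t, C m * J := by
        refine Finset.sum_le_sum fun m _ => ?_
        have hI0 : 0 ≤ ∫ n, n ⬝ᵥ (riccatiIter A Q b γ r m).mulVec n ∂μ :=
          integral_nonneg fun n => BellmanAux.psd_nonneg (hpsd r hr m).1 n
        have hIle : (∫ n, n ⬝ᵥ (riccatiIter A Q b γ r m).mulVec n ∂μ) ≤ C m * J := by
          rw [hJ, ← MeasureTheory.integral_const_mul]
          refine integral_mono (BellmanAux.integrable_quad hmom _) (hmom.const_mul _)
            fun n => ?_
          exact (BellmanAux.riccati_le_lmat hQ hγ0 hr m n).trans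
            (le_of_abs_le (BellmanAux.quad_abs_le _ n))
        have hγle : γ ^ (t - m) ≤ 1 := pow_le_one₀ hγ0.le hγ1.le
        exact le_trans (mul_le_of_le_one_left hI0 hγle) hIle
      have hS0 : 0 ≤ ∑ i, x i ^ 2 := Finset.sum_nonneg fun i _ => sq_nonneg _
      rw [abs_of_nonneg (by linarith)]
      nlinarith [mul_nonneg hD0 hS0, hC0 t]
  exact ⟨hpsd, hnormV, fun t x r hr => hclosed t x r hr⟩


end
end

section
/- Suppose that for every r > 0 there is a symmetric positive semidefinite matrix K(r) satisfying the discrete algebraic Riccati equation with penalty r, that sup_{t≥0, r>0} ‖K_t(r)‖_F < ∞, and that sup_{r>0} ‖K_t(r) − K(r)‖_F → 0 as t → ∞ (Frobenius norm), where K_t(r) are the Riccati iterates started from K₀(r) = Q. Define J*(x,r) := xᵀK(r) x + (γ/(1−γ)) ∫ nᵀK(r) n dμ(n). Then J* ∈ V and the Bellman iterates v_t := T^t 0 (starting from the zero function) converge to J* in the metric ρ: lim_{t→∞} ‖T^t 0 − J*‖ = 0. -/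
open MeasureTheory Matrix Filter

noncomputable section

/-- The metric `ρ(v,w) = ‖v − w‖` induced by the weighted sup-norm. -/
def distV {d : ℕ} (v w : (Fin d → ℝ) → ℝ → ℝ) : ℝ :=
  (normV (fun x r => v x r - w x r)).toReal

/-- Frobenius norm of a real matrix. -/
def frob {d : ℕ} (M : Matrix (Fin d) (Fin d) ℝ) : ℝ :=
  Real.sqrt (∑ i, ∑ j, (M i j) ^ 2)

set_option linter.unusedSectionVars false


variable {d : ℕ}

lemma dot_symm (K : Matrix (Fin d) (Fin d) ℝ) (hsym : Kᵀ = K) (x y : Fin d → ℝ) :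
    y ⬝ᵥ K *ᵥ x = x ⬝ᵥ K *ᵥ y := by
  conv_lhs => rw [dotProduct_mulVec, ← hsym, vecMul_transpose]
  rw [dotProduct_comm]

lemma vbb_mulVec (b w : Fin d → ℝ) : vecMulVec b b *ᵥ w = (b ⬝ᵥ w) • b := by
  funext i
  simp [vecMulVec_apply, mulVec, dotProduct, Finset.mul_sum, mul_comm, mul_left_comm]

lemma dot_conj (A M : Matrix (Fin d) (Fin d) ℝ) (x : Fin d → ℝ) :
    x ⬝ᵥ (Aᵀ * M * A) *ᵥ x = (A *ᵥ x) ⬝ᵥ M *ᵥ (A *ᵥ x) := by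
  rw [← mulVec_mulVec, ← mulVec_mulVec, dotProduct_mulVec, vecMul_transpose]

lemma cs_psd (K : Matrix (Fin d) (Fin d) ℝ) (hsym : Kᵀ = K)
    (hpsd : ∀ z, 0 ≤ z ⬝ᵥ K *ᵥ z) (x y : Fin d → ℝ) :
    (x ⬝ᵥ K *ᵥ y)^2 ≤ (x ⬝ᵥ K *ᵥ x) * (y ⬝ᵥ K *ᵥ y) := by
  have key : ∀ t : ℝ, 0 ≤ (y ⬝ᵥ K *ᵥ y) * (t*t) + (2*(x ⬝ᵥ K *ᵥ y))*t + x ⬝ᵥ K *ᵥ x := by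
    intro t
    have h := hpsd (x + t • y)
    have hx : y ⬝ᵥ K *ᵥ x = x ⬝ᵥ K *ᵥ y := dot_symm K hsym x y
    simp only [mulVec_add, dotProduct_add, add_dotProduct, mulVec_smul, dotProduct_smul,
      smul_dotProduct, smul_eq_mul, hx] at h
    nlinarith [h]
  have h2 := discrim_le_zero key
  unfold discrim at h2
  nlinarith [h2]


lemma step_symm (A Q : Matrix (Fin d) (Fin d) ℝ) (b : Fin d → ℝ) (γ r : ℝ)
    (hQ : Qᵀ = Q) (K : Matrix (Fin d) (Fin d) ℝ) (hsym : Kᵀ = K) :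
    (riccatiStep A Q b γ r K)ᵀ = riccatiStep A Q b γ r K := by
  have hvbb : (vecMulVec b b)ᵀ = vecMulVec b b := by
    ext i j; simp [transpose_apply, vecMulVec_apply, mul_comm]
  simp [riccatiStep, transpose_add, transpose_mul, transpose_smul, transpose_sub, hsym, hQ,
    hvbb, Matrix.mul_assoc]

lemma quad_step (A Q : Matrix (Fin d) (Fin d) ℝ) (b : Fin d → ℝ) (γ r : ℝ)
    (K : Matrix (Fin d) (Fin d) ℝ) (hsym : Kᵀ = K) (x : Fin d → ℝ) :
    x ⬝ᵥ (riccatiStep A Q b γ r K) *ᵥ x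
      = x ⬝ᵥ Q *ᵥ x + γ * ((A *ᵥ x) ⬝ᵥ K *ᵥ (A *ᵥ x))
        - γ^2/(γ * (b ⬝ᵥ K *ᵥ b) + r) * ((A *ᵥ x) ⬝ᵥ K *ᵥ b)^2 := by
  set z := A *ᵥ x with hz
  have h1 : (K * vecMulVec b b * K) *ᵥ z = (b ⬝ᵥ K *ᵥ z) • (K *ᵥ b) := by
    rw [← mulVec_mulVec, ← mulVec_mulVec, vbb_mulVec, mulVec_smul]
  have h2 : b ⬝ᵥ K *ᵥ z = z ⬝ᵥ K *ᵥ b := dot_symm K hsym z b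
  simp only [riccatiStep, add_mulVec, dotProduct_add, dot_conj, sub_mulVec, dotProduct_sub,
    smul_mulVec, dotProduct_smul, smul_eq_mul, ← hz, h1, h2]
  ring

lemma step_psd (A Q : Matrix (Fin d) (Fin d) ℝ) (b : Fin d → ℝ) {γ r : ℝ}
    (hγ : 0 < γ) (hr : 0 < r) (hQpsd : ∀ z, 0 ≤ z ⬝ᵥ Q *ᵥ z)
    (K : Matrix (Fin d) (Fin d) ℝ) (hsym : Kᵀ = K) (hpsd : ∀ z, 0 ≤ z ⬝ᵥ K *ᵥ z)
    (x : Fin d → ℝ) : 0 ≤ x ⬝ᵥ (riccatiStep A Q b γ r K) *ᵥ x := by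
  rw [quad_step A Q b γ r K hsym x]
  set z := A *ᵥ x
  have hqb : 0 ≤ b ⬝ᵥ K *ᵥ b := hpsd b
  have hqz : 0 ≤ z ⬝ᵥ K *ᵥ z := hpsd z
  have hden : 0 < γ * (b ⬝ᵥ K *ᵥ b) + r := by nlinarith
  have hcs : (z ⬝ᵥ K *ᵥ b)^2 ≤ (z ⬝ᵥ K *ᵥ z) * (b ⬝ᵥ K *ᵥ b) := cs_psd K hsym hpsd z b
  have key : γ^2/(γ * (b ⬝ᵥ K *ᵥ b) + r) * (z ⬝ᵥ K *ᵥ b)^2 ≤ γ * (z ⬝ᵥ K *ᵥ z) := by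
    rw [div_mul_eq_mul_div, div_le_iff₀ hden]
    nlinarith [mul_le_mul_of_nonneg_left hcs (sq_nonneg γ), mul_nonneg (mul_nonneg hγ.le hqz) hr.le]
  have := hQpsd x
  linarith


lemma frob_nonneg (M : Matrix (Fin d) (Fin d) ℝ) : 0 ≤ frob M := Real.sqrt_nonneg _

lemma frob_eq_norm (M : Matrix (Fin d) (Fin d) ℝ) :
    frob M = ‖(WithLp.toLp 2 (fun p : Fin d × Fin d => M p.1 p.2) : EuclideanSpace ℝ (Fin d × Fin d))‖ := by
  rw [EuclideanSpace.norm_eq]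
  simp [frob, Fintype.sum_prod_type, Real.norm_eq_abs, sq_abs]

lemma frob_sub_le (M N : Matrix (Fin d) (Fin d) ℝ) : frob (M - N) ≤ frob M + frob N := by
  rw [frob_eq_norm, frob_eq_norm, frob_eq_norm]
  exact norm_sub_le (E := EuclideanSpace ℝ (Fin d × Fin d)) (WithLp.toLp 2 fun p => M p.1 p.2) (WithLp.toLp 2 fun p => N p.1 p.2)

lemma abs_quad_le (M : Matrix (Fin d) (Fin d) ℝ) (x : Fin d → ℝ) :
    |x ⬝ᵥ M *ᵥ x| ≤ frob M * ∑ i, x i ^ 2 := by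
  have hqe : x ⬝ᵥ M *ᵥ x = ∑ p : Fin d × Fin d, M p.1 p.2 * (x p.1 * x p.2) := by
    simp [dotProduct, mulVec, Finset.mul_sum, Fintype.sum_prod_type, mul_comm, mul_left_comm]
  have hcs := Finset.sum_mul_sq_le_sq_mul_sq Finset.univ (fun p : Fin d × Fin d => M p.1 p.2)
      (fun p => x p.1 * x p.2)
  have hg : ∑ p : Fin d × Fin d, (x p.1 * x p.2)^2 = (∑ i, x i ^2) * (∑ i, x i ^2) := by
    simp [Fintype.sum_prod_type, mul_pow, ← Finset.sum_mul, ← Finset.mul_sum]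
  rw [hqe]
  have h1 : |∑ p : Fin d × Fin d, M p.1 p.2 * (x p.1 * x p.2)| =
      Real.sqrt ((∑ p : Fin d × Fin d, M p.1 p.2 * (x p.1 * x p.2))^2) :=
    (Real.sqrt_sq_eq_abs _).symm
  rw [h1]
  have h2 : (∑ p : Fin d × Fin d, M p.1 p.2 * (x p.1 * x p.2))^2 ≤
      (∑ i, ∑ j, (M i j)^2) * ((∑ i, x i ^2) * (∑ i, x i ^2)) := by
    rw [← hg]
    simpa [Fintype.sum_prod_type] using hcs
  calc Real.sqrt _ ≤ Real.sqrt ((∑ i, ∑ j, (M i j)^2) * ((∑ i, x i ^2) * (∑ i, x i ^2))) :=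
        Real.sqrt_le_sqrt h2
    _ = frob M * ∑ i, x i ^ 2 := by
        rw [Real.sqrt_mul (by positivity), Real.sqrt_mul_self (by positivity)]
        rfl

section Integrals
variable {μ : Measure (Fin d → ℝ)} [IsProbabilityMeasure μ]
variable (hmom : Integrable (fun n => ∑ i, (n i) ^ 2) μ)
include hmom

lemma integrable_coord (i : Fin d) : Integrable (fun n : Fin d → ℝ => n i) μ := by
  apply Integrable.mono' ((integrable_const (1:ℝ)).add hmom)
    (measurable_pi_apply i).aestronglyMeasurable
  refine ae_of_all _ fun n => ?_
  have h1 : (n i)^2 ≤ ∑ j, (n j)^2 :=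
    Finset.single_le_sum (fun j _ => sq_nonneg (n j)) (Finset.mem_univ i)
  have h2 : |n i| ≤ 1 + (n i)^2 := by nlinarith [sq_nonneg (|n i| - 1), sq_abs (n i)]
  have h3 : |n i| ≤ 1 + ∑ j, (n j)^2 := by linarith
  simpa [Real.norm_eq_abs] using h3

omit hmom in
lemma measurable_quad (K : Matrix (Fin d) (Fin d) ℝ) :
    Measurable (fun n : Fin d → ℝ => n ⬝ᵥ K *ᵥ n) := by
  simp only [dotProduct, mulVec]
  exact Finset.measurable_sum _ fun i _ => (measurable_pi_apply i).mul
    (Finset.measurable_sum _ fun j _ => measurable_const.mul (measurable_pi_apply j))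

lemma integrable_quad (K : Matrix (Fin d) (Fin d) ℝ) :
    Integrable (fun n : Fin d → ℝ => n ⬝ᵥ K *ᵥ n) μ := by
  apply Integrable.mono' (hmom.const_mul (frob K)) (measurable_quad K).aestronglyMeasurable
  exact ae_of_all _ fun n => by simpa [Real.norm_eq_abs] using abs_quad_le K n

lemma integrable_dot (w : Fin d → ℝ) : Integrable (fun n : Fin d → ℝ => w ⬝ᵥ n) μ := by
  simp only [dotProduct]
  exact integrable_finset_sum _ fun i _ => (integrable_coord hmom i).const_mul _

lemma m_bound (K : Matrix (Fin d) (Fin d) ℝ) :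
    |∫ n, n ⬝ᵥ K *ᵥ n ∂μ| ≤ frob K * ∫ n, ∑ i, (n i)^2 ∂μ := by
  calc |∫ n, n ⬝ᵥ K *ᵥ n ∂μ| ≤ ∫ n, |n ⬝ᵥ K *ᵥ n| ∂μ := by
        simpa [Real.norm_eq_abs] using
          norm_integral_le_integral_norm (μ := μ) (fun n : Fin d → ℝ => n ⬝ᵥ K *ᵥ n)
    _ ≤ ∫ n, frob K * ∑ i, (n i)^2 ∂μ :=
        integral_mono (integrable_quad hmom K).abs (hmom.const_mul _)
          (fun n => abs_quad_le K n)
    _ = frob K * ∫ n, ∑ i, (n i)^2 ∂μ := integral_const_mul _ _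

variable (hmean : ∀ i, ∫ n, n i ∂μ = 0)
include hmean

lemma integral_dot_zero (w : Fin d → ℝ) : ∫ n, w ⬝ᵥ n ∂μ = 0 := by
  simp only [dotProduct]
  rw [integral_finset_sum _ fun i _ => (integrable_coord hmom i).const_mul _]
  simp [integral_const_mul, hmean]

lemma integral_shift (K : Matrix (Fin d) (Fin d) ℝ) (hsym : Kᵀ = K) (y : Fin d → ℝ) (c : ℝ) :
    ∫ n, ((y + n) ⬝ᵥ K *ᵥ (y + n) + c) ∂μ
      = y ⬝ᵥ K *ᵥ y + (∫ n, n ⬝ᵥ K *ᵥ n ∂μ) + c := by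
  have hy : ∀ n : Fin d → ℝ, y ⬝ᵥ K *ᵥ n = (K *ᵥ y) ⬝ᵥ n := by
    intro n
    conv_lhs => rw [dotProduct_mulVec, ← hsym, vecMul_transpose]
  have hexp : ∀ n : Fin d → ℝ, (y + n) ⬝ᵥ K *ᵥ (y + n) + c
      = ((2:ℝ) • (K *ᵥ y)) ⬝ᵥ n + (n ⬝ᵥ K *ᵥ n + (y ⬝ᵥ K *ᵥ y + c)) := by
    intro n
    have hn : n ⬝ᵥ K *ᵥ y = y ⬝ᵥ K *ᵥ n := dot_symm K hsym y n
    simp only [mulVec_add, dotProduct_add, add_dotProduct, hn, hy n, smul_dotProduct,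
      smul_eq_mul]
    ring
  rw [integral_congr_ae (ae_of_all _ hexp)]
  have hI1 : Integrable (fun n : Fin d → ℝ => ((2:ℝ) • (K *ᵥ y)) ⬝ᵥ n) μ := integrable_dot hmom _
  have hI2 : Integrable (fun n : Fin d → ℝ => n ⬝ᵥ K *ᵥ n + (y ⬝ᵥ K *ᵥ y + c)) μ :=
    (integrable_quad hmom K).add (integrable_const _)
  rw [integral_add hI1 hI2, integral_add (integrable_quad hmom K) (integrable_const _),
    integral_dot_zero hmom hmean, integral_const]
  simp
  ring

end Integrals

lemma quadratic_iInf {α : ℝ} (β δ : ℝ) (hα : 0 < α) :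
    ⨅ u : ℝ, (α * u^2 + β * u + δ) = δ - β^2/(4*α) := by
  have key : ∀ u : ℝ, α*u^2 + β*u + δ = α*(u + β/(2*α))^2 + (δ - β^2/(4*α)) := by
    intro u; field_simp; ring
  apply le_antisymm
  · have h := ciInf_le (f := fun u : ℝ => α * u^2 + β * u + δ)
      ⟨δ - β^2/(4*α), by
        rintro y ⟨u, rfl⟩
        show δ - β^2/(4*α) ≤ α * u^2 + β * u + δ
        rw [key u]
        nlinarith [sq_nonneg (u + β/(2*α))]⟩ (-(β/(2*α)))
    refine h.trans_eq ?_
    rw [key]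
    simp
  · exact le_ciInf fun u => by rw [key u]; nlinarith [sq_nonneg (u + β/(2*α))]


section Step
variable {μ : Measure (Fin d → ℝ)} [IsProbabilityMeasure μ]
variable (hmom : Integrable (fun n => ∑ i, (n i) ^ 2) μ)
variable (hmean : ∀ i, ∫ n, n i ∂μ = 0)
include hmom hmean

lemma bellman_step (A Q : Matrix (Fin d) (Fin d) ℝ) (b : Fin d → ℝ) {γ : ℝ} (hγ : 0 < γ)
    (K : Matrix (Fin d) (Fin d) ℝ) (hsym : Kᵀ = K) (hpsd : ∀ z, 0 ≤ z ⬝ᵥ K *ᵥ z)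
    {r : ℝ} (hr : 0 < r) (c : ℝ) (v : (Fin d → ℝ) → ℝ → ℝ)
    (hv : ∀ y, v y r = y ⬝ᵥ K *ᵥ y + c) (x : Fin d → ℝ) :
    bellmanT A Q b γ μ v x r
      = x ⬝ᵥ (riccatiStep A Q b γ r K) *ᵥ x
        + γ * ((∫ n, n ⬝ᵥ K *ᵥ n ∂μ) + c) := by
  set m := ∫ n, n ⬝ᵥ K *ᵥ n ∂μ with hm
  set z := A *ᵥ x with hzdef
  set qb := b ⬝ᵥ K *ᵥ b with hqb
  set β0 := z ⬝ᵥ K *ᵥ b with hβ0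
  have hqbnn : 0 ≤ qb := hpsd b
  have hα : 0 < r + γ * qb := by nlinarith
  have hint : ∀ u : ℝ, ∫ n, v (A *ᵥ x + u • b + n) r ∂μ
      = (z + u • b) ⬝ᵥ K *ᵥ (z + u • b) + m + c := by
    intro u
    rw [show (fun n => v (A *ᵥ x + u • b + n) r)
        = fun n => ((z + u • b) + n) ⬝ᵥ K *ᵥ ((z + u • b) + n) + c from funext fun n => hv _]
    rw [integral_shift hmom hmean K hsym]
  have hbody : ∀ u : ℝ, r * u ^ 2 + γ * ∫ n, v (A.mulVec x + u • b + n) r ∂μ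
      = (r + γ * qb) * u^2 + (2 * γ * β0) * u + γ * (z ⬝ᵥ K *ᵥ z + m + c) := by
    intro u
    rw [show A.mulVec x = A *ᵥ x from rfl, hint u]
    have hbz : b ⬝ᵥ K *ᵥ z = β0 := dot_symm K hsym z b
    simp only [mulVec_add, dotProduct_add, add_dotProduct, mulVec_smul, dotProduct_smul,
      smul_dotProduct, smul_eq_mul, hbz, hβ0]
    ring
  unfold bellmanT
  rw [show (fun u : ℝ => r * u ^ 2 + γ * ∫ n, v (A.mulVec x + u • b + n) r ∂μ)
      = fun u : ℝ => (r + γ * qb) * u^2 + (2 * γ * β0) * u + γ * (z ⬝ᵥ K *ᵥ z + m + c)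
      from funext hbody]
  rw [quadratic_iInf _ _ hα, quad_step A Q b γ r K hsym x]
  rw [show x ⬝ᵥ Q.mulVec x = x ⬝ᵥ Q *ᵥ x from rfl, ← hzdef, ← hqb, ← hβ0]
  have hδ : (2 * γ * β0)^2/(4*(r + γ * qb)) = γ^2/(γ * qb + r) * β0^2 := by
    rw [add_comm (γ * qb) r]
    field_simp
    ring
  rw [hδ]
  ring

end Step


lemma riccatiIter_zero (A Q : Matrix (Fin d) (Fin d) ℝ) (b : Fin d → ℝ) (γ r : ℝ) :
    riccatiIter A Q b γ r 0 = Q := rfl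

lemma riccatiIter_succ (A Q : Matrix (Fin d) (Fin d) ℝ) (b : Fin d → ℝ) (γ r : ℝ) (t : ℕ) :
    riccatiIter A Q b γ r (t+1) = riccatiStep A Q b γ r (riccatiIter A Q b γ r t) :=
  Function.iterate_succ_apply' _ _ _

lemma riccatiIter_symm_psd (A Q : Matrix (Fin d) (Fin d) ℝ) (b : Fin d → ℝ) {γ r : ℝ}
    (hγ : 0 < γ) (hr : 0 < r) (hQsym : Qᵀ = Q) (hQpsd : ∀ z, 0 ≤ z ⬝ᵥ Q *ᵥ z) (t : ℕ) :
    (riccatiIter A Q b γ r t)ᵀ = riccatiIter A Q b γ r t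
      ∧ ∀ z, 0 ≤ z ⬝ᵥ (riccatiIter A Q b γ r t) *ᵥ z := by
  induction t with
  | zero => exact ⟨hQsym, hQpsd⟩
  | succ t ih =>
    rw [riccatiIter_succ]
    exact ⟨step_symm A Q b γ r hQsym _ ih.1,
      fun z => step_psd A Q b hγ hr hQpsd _ ih.1 ih.2 z⟩

def cseq {d : ℕ} (A Q : Matrix (Fin d) (Fin d) ℝ) (b : Fin d → ℝ) (γ : ℝ)
    (μ : Measure (Fin d → ℝ)) (r : ℝ) : ℕ → ℝ
  | 0 => 0
  | (t+1) => γ * ((∫ n, n ⬝ᵥ (riccatiIter A Q b γ r t) *ᵥ n ∂μ) + cseq A Q b γ μ r t)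

section Iter
variable {μ : Measure (Fin d → ℝ)} [IsProbabilityMeasure μ]
variable (hmom : Integrable (fun n => ∑ i, (n i) ^ 2) μ)
variable (hmean : ∀ i, ∫ n, n i ∂μ = 0)
include hmom hmean

lemma iterate_eq (A Q : Matrix (Fin d) (Fin d) ℝ) (b : Fin d → ℝ) {γ : ℝ} (hγ : 0 < γ)
    (hQsym : Qᵀ = Q) (hQpsd : ∀ z, 0 ≤ z ⬝ᵥ Q *ᵥ z) :
    ∀ t : ℕ, ∀ r : ℝ, 0 < r → ∀ x : Fin d → ℝ,
      (bellmanT A Q b γ μ)^[t+1] (fun _ _ => 0) x r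
        = x ⬝ᵥ (riccatiIter A Q b γ r t) *ᵥ x + cseq A Q b γ μ r t := by
  intro t
  induction t with
  | zero =>
    intro r hr x
    rw [Function.iterate_one]
    unfold bellmanT
    have h0 : ∀ u : ℝ, r * u ^ 2 + γ * ∫ _n, (0:ℝ) ∂μ = r * u^2 + 0 * u + 0 := by
      intro u; simp
    rw [show (fun u : ℝ => r * u ^ 2 + γ * ∫ _n, (0:ℝ) ∂μ)
        = fun u : ℝ => r * u^2 + 0 * u + 0 from funext h0, quadratic_iInf _ _ hr]
    simp [riccatiIter_zero, cseq]
  | succ t ih =>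
    intro r hr x
    rw [Function.iterate_succ_apply']
    have hK := riccatiIter_symm_psd A Q b hγ hr hQsym hQpsd t
    rw [bellman_step hmom hmean A Q b hγ _ hK.1 hK.2 hr (cseq A Q b γ μ r t)
      _ (fun y => ih r hr y) x]
    rw [riccatiIter_succ]
    rfl

end Iter



lemma normV_le (v : (Fin d → ℝ) → ℝ → ℝ) (a e : ℝ) (ha : 0 ≤ a) (he : 0 ≤ e)
    (h : ∀ x : Fin d → ℝ, ∀ r : ℝ, 0 < r → |v x r| ≤ a * (∑ i, x i ^ 2) + e) :
    normV v ≤ ENNReal.ofReal (a + e) := by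
  unfold normV
  refine iSup_le fun x => iSup_le fun r => ?_
  apply ENNReal.ofReal_le_ofReal
  set D := (max (Real.sqrt ((∑ i, x i ^ 2) + r.1 ^ 2)) 1) ^ 2 with hD
  have h1 : (1:ℝ) ≤ D := by
    rw [hD]
    calc (1:ℝ) = 1^2 := by norm_num
    _ ≤ _ := by
      apply pow_le_pow_left₀ (by norm_num) (le_max_right _ _)
  have hsq : 0 ≤ (∑ i, x i ^ 2) + r.1 ^ 2 := by positivity
  have h2 : (∑ i, x i ^ 2) ≤ D := by
    calc (∑ i, x i ^ 2) ≤ (∑ i, x i ^ 2) + r.1 ^ 2 := by nlinarith [sq_nonneg r.1]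
    _ = Real.sqrt ((∑ i, x i ^ 2) + r.1 ^ 2) ^ 2 := (Real.sq_sqrt hsq).symm
    _ ≤ D := by
      apply pow_le_pow_left₀ (Real.sqrt_nonneg _) (le_max_left _ _)
  have hD0 : 0 < D := lt_of_lt_of_le one_pos h1
  rw [div_le_iff₀ hD0]
  have hv := h x r.1 r.2
  calc |v x r.1| ≤ a * (∑ i, x i ^ 2) + e := hv
    _ ≤ a * D + e * D := by nlinarith
    _ = (a + e) * D := by ring

lemma distV_le (v w : (Fin d → ℝ) → ℝ → ℝ) (a e : ℝ) (ha : 0 ≤ a) (he : 0 ≤ e)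
    (h : ∀ x : Fin d → ℝ, ∀ r : ℝ, 0 < r → |v x r - w x r| ≤ a * (∑ i, x i ^ 2) + e) :
    distV v w ≤ a + e := by
  unfold distV
  have := normV_le (fun x r => v x r - w x r) a e ha he h
  exact ENNReal.toReal_le_of_le_ofReal (by linarith) this

/-- If, for every `r > 0`, a symmetric positive semidefinite solution `K(r)` of the discrete
algebraic Riccati equation exists, the Riccati iterates are uniformly bounded in Frobenius norm
and converge to `K(r)` uniformly in `r`, then
`J*(x,r) = xᵀK(r) x + (γ/(1−γ)) ∫ nᵀK(r) n dμ` belongs to `V` and the Bellman iterates `T^t 0`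
converge to `J*` in the metric `ρ`. -/
theorem bellman_iterates_converge_to_optimal_cost
    (d : ℕ) (hd : 1 ≤ d)
    (A Q : Matrix (Fin d) (Fin d) ℝ) (b : Fin d → ℝ) (hQ : Q.PosSemidef)
    (γ : ℝ) (hγ : γ ∈ Set.Ioo (0 : ℝ) 1)
    (μ : Measure (Fin d → ℝ)) [IsProbabilityMeasure μ]
    (hmean : ∀ i, ∫ n, n i ∂μ = 0)
    (hmom : Integrable (fun n => ∑ i, (n i) ^ 2) μ)
    (K : ℝ → Matrix (Fin d) (Fin d) ℝ)
    (hK : ∀ r > (0 : ℝ), (K r).PosSemidef ∧ K r = riccatiStep A Q b γ r (K r))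
    (hbdd : ∃ C : ℝ, ∀ t : ℕ, ∀ r > (0 : ℝ), frob (riccatiIter A Q b γ r t) ≤ C)
    (hconv : ∀ ε > (0 : ℝ), ∃ T : ℕ, ∀ t ≥ T, ∀ r > (0 : ℝ),
      frob (riccatiIter A Q b γ r t - K r) < ε) :
    normV (fun x r => x ⬝ᵥ (K r).mulVec x +
        γ / (1 - γ) * ∫ n, n ⬝ᵥ (K r).mulVec n ∂μ) < ⊤ ∧
    Tendsto (fun t => distV ((bellmanT A Q b γ μ)^[t] (fun _ _ => 0))
        (fun x r => x ⬝ᵥ (K r).mulVec x + γ / (1 - γ) * ∫ n, n ⬝ᵥ (K r).mulVec n ∂μ))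
      atTop (nhds 0) := by
  obtain ⟨hγ0, hγ1⟩ := hγ
  have h1γ : (0:ℝ) < 1 - γ := by linarith
  have h1γne : (1:ℝ) - γ ≠ 0 := ne_of_gt h1γ
  have hγdiv : (0:ℝ) ≤ γ/(1-γ) := div_nonneg hγ0.le h1γ.le
  have hQsym : Qᵀ = Q := by simpa [Matrix.IsSymm] using hQ.1
  have hQpsd : ∀ z, 0 ≤ z ⬝ᵥ Q *ᵥ z := fun z => by simpa using hQ.dotProduct_mulVec_nonneg z
  have hM2 : (0:ℝ) ≤ ∫ n, ∑ i, (n i)^2 ∂μ :=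
    integral_nonneg fun n => Finset.sum_nonneg fun i _ => sq_nonneg _
  set M2 : ℝ := ∫ n, ∑ i, (n i)^2 ∂μ with hM2def
  obtain ⟨C, hC⟩ := hbdd
  have hC0 : (0:ℝ) ≤ C := le_trans (frob_nonneg _) (hC 0 1 one_pos)
  obtain ⟨T1, hT1⟩ := hconv 1 one_pos
  have hKfr : ∀ r : ℝ, 0 < r → frob (K r) ≤ C + 1 := by
    intro r hr
    have h2 := hT1 T1 le_rfl r hr
    calc frob (K r)
        = frob (riccatiIter A Q b γ r T1 - (riccatiIter A Q b γ r T1 - K r)) := by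
          rw [sub_sub_cancel]
      _ ≤ frob (riccatiIter A Q b γ r T1) + frob (riccatiIter A Q b γ r T1 - K r) :=
          frob_sub_le _ _
      _ ≤ C + 1 := add_le_add (hC T1 r hr) h2.le
  have hmb : ∀ r : ℝ, 0 < r → |∫ n, n ⬝ᵥ (K r).mulVec n ∂μ| ≤ (C+1) * M2 := by
    intro r hr
    calc |∫ n, n ⬝ᵥ (K r).mulVec n ∂μ| ≤ frob (K r) * M2 := m_bound hmom _
      _ ≤ (C+1) * M2 := mul_le_mul_of_nonneg_right (hKfr r hr) hM2
  have hmtb : ∀ (t : ℕ) (r : ℝ), 0 < r →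
      |∫ n, n ⬝ᵥ (riccatiIter A Q b γ r t) *ᵥ n ∂μ| ≤ C * M2 := by
    intro t r hr
    calc |∫ n, n ⬝ᵥ (riccatiIter A Q b γ r t) *ᵥ n ∂μ|
        ≤ frob (riccatiIter A Q b γ r t) * M2 := m_bound hmom _
      _ ≤ C * M2 := mul_le_mul_of_nonneg_right (hC t r hr) hM2
  constructor
  · refine lt_of_le_of_lt (normV_le _ (C+1) (γ/(1-γ)*((C+1)*M2)) (by positivity)
      (by positivity) ?_) ENNReal.ofReal_lt_top
    intro x r hr
    have h1 : |x ⬝ᵥ (K r) *ᵥ x| ≤ frob (K r) * ∑ i, x i ^2 := abs_quad_le _ _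
    have hsum : (0:ℝ) ≤ ∑ i, x i ^ 2 := Finset.sum_nonneg fun i _ => sq_nonneg _
    calc |x ⬝ᵥ (K r).mulVec x + γ/(1-γ) * ∫ n, n ⬝ᵥ (K r).mulVec n ∂μ|
        ≤ |x ⬝ᵥ (K r) *ᵥ x| + |γ/(1-γ) * ∫ n, n ⬝ᵥ (K r).mulVec n ∂μ| := abs_add_le _ _
      _ ≤ frob (K r) * (∑ i, x i ^2) + γ/(1-γ) * ((C+1)*M2) := by
          rw [abs_mul, abs_of_nonneg hγdiv]
          exact add_le_add h1 (mul_le_mul_of_nonneg_left (hmb r hr) hγdiv)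
      _ ≤ (C+1) * (∑ i, x i ^2) + γ/(1-γ)*((C+1)*M2) :=
          add_le_add (mul_le_mul_of_nonneg_right (hKfr r hr) hsum) le_rfl
  -- convergence part
  have hfix : ∀ r : ℝ, γ/(1-γ) * (∫ n, n ⬝ᵥ (K r).mulVec n ∂μ)
      = γ * ((∫ n, n ⬝ᵥ (K r).mulVec n ∂μ) + γ/(1-γ) * ∫ n, n ⬝ᵥ (K r).mulVec n ∂μ) := by
    intro r
    set mm := ∫ n, n ⬝ᵥ (K r).mulVec n ∂μ
    have e1 : mm + γ/(1-γ)*mm = mm/(1-γ) := by field_simp; ring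
    rw [e1, div_mul_eq_mul_div, mul_div_assoc]
  have hcb : ∀ (t : ℕ) (r : ℝ), 0 < r → |cseq A Q b γ μ r t| ≤ γ/(1-γ) * (C*M2) := by
    intro t
    induction t with
    | zero =>
      intro r hr
      simpa [cseq] using (by positivity : (0:ℝ) ≤ γ/(1-γ)*(C*M2))
    | succ t ih =>
      intro r hr
      have h1 : cseq A Q b γ μ r (t+1)
          = γ * ((∫ n, n ⬝ᵥ (riccatiIter A Q b γ r t) *ᵥ n ∂μ) + cseq A Q b γ μ r t) := rfl
      rw [h1, abs_mul, abs_of_nonneg hγ0.le]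
      have h2 : |(∫ n, n ⬝ᵥ (riccatiIter A Q b γ r t) *ᵥ n ∂μ) + cseq A Q b γ μ r t|
          ≤ C*M2 + γ/(1-γ)*(C*M2) :=
        (abs_add_le _ _).trans (add_le_add (hmtb t r hr) (ih r hr))
      have h3 : γ * (C*M2 + γ/(1-γ)*(C*M2)) = γ/(1-γ)*(C*M2) := by
        have e1 : C*M2 + γ/(1-γ)*(C*M2) = (C*M2)/(1-γ) := by field_simp; ring
        rw [e1]; ring
      calc γ * |(∫ n, n ⬝ᵥ (riccatiIter A Q b γ r t) *ᵥ n ∂μ) + cseq A Q b γ μ r t|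
          ≤ γ * (C*M2 + γ/(1-γ)*(C*M2)) := mul_le_mul_of_nonneg_left h2 hγ0.le
        _ = γ/(1-γ)*(C*M2) := h3
  set B2 : ℝ := γ/(1-γ)*(C*M2) + γ/(1-γ)*((C+1)*M2) + 1 with hB2def
  have hB2 : (0:ℝ) < B2 := by positivity
  have hctb : ∀ (t : ℕ) (r : ℝ), 0 < r →
      |cseq A Q b γ μ r t - γ/(1-γ) * ∫ n, n ⬝ᵥ (K r).mulVec n ∂μ| ≤ B2 := by
    intro t r hr
    have h1 : |γ/(1-γ) * ∫ n, n ⬝ᵥ (K r).mulVec n ∂μ| ≤ γ/(1-γ)*((C+1)*M2) := by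
      rw [abs_mul, abs_of_nonneg hγdiv]
      exact mul_le_mul_of_nonneg_left (hmb r hr) hγdiv
    have h2 := hcb t r hr
    calc |cseq A Q b γ μ r t - γ/(1-γ) * ∫ n, n ⬝ᵥ (K r).mulVec n ∂μ|
        ≤ |cseq A Q b γ μ r t| + |γ/(1-γ) * ∫ n, n ⬝ᵥ (K r).mulVec n ∂μ| := abs_sub _ _
      _ ≤ B2 := by rw [hB2def]; linarith
  have hrec : ∀ (t : ℕ) (r : ℝ), 0 < r →
      |cseq A Q b γ μ r (t+1) - γ/(1-γ) * ∫ n, n ⬝ᵥ (K r).mulVec n ∂μ|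
      ≤ γ * (frob (riccatiIter A Q b γ r t - K r) * M2
          + |cseq A Q b γ μ r t - γ/(1-γ) * ∫ n, n ⬝ᵥ (K r).mulVec n ∂μ|) := by
    intro t r hr
    have hsub : (∫ n, n ⬝ᵥ (riccatiIter A Q b γ r t) *ᵥ n ∂μ)
        - (∫ n, n ⬝ᵥ (K r).mulVec n ∂μ)
        = ∫ n, n ⬝ᵥ ((riccatiIter A Q b γ r t) - K r) *ᵥ n ∂μ := by
      rw [← integral_sub (integrable_quad hmom _) (integrable_quad hmom _)]
      congr 1; funext n; simp [sub_mulVec, dotProduct_sub]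
    have hmd : |(∫ n, n ⬝ᵥ (riccatiIter A Q b γ r t) *ᵥ n ∂μ)
        - (∫ n, n ⬝ᵥ (K r).mulVec n ∂μ)|
        ≤ frob (riccatiIter A Q b γ r t - K r) * M2 := by
      rw [hsub]; exact m_bound hmom _
    have he : cseq A Q b γ μ r (t+1) - γ/(1-γ) * ∫ n, n ⬝ᵥ (K r).mulVec n ∂μ
        = γ * (((∫ n, n ⬝ᵥ (riccatiIter A Q b γ r t) *ᵥ n ∂μ)
            - (∫ n, n ⬝ᵥ (K r).mulVec n ∂μ))
          + (cseq A Q b γ μ r t - γ/(1-γ) * ∫ n, n ⬝ᵥ (K r).mulVec n ∂μ)) := by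
      have h1 : cseq A Q b γ μ r (t+1)
          = γ * ((∫ n, n ⬝ᵥ (riccatiIter A Q b γ r t) *ᵥ n ∂μ) + cseq A Q b γ μ r t) := rfl
      rw [h1]
      nth_rewrite 1 [hfix r]
      ring
    rw [he, abs_mul, abs_of_nonneg hγ0.le]
    exact mul_le_mul_of_nonneg_left ((abs_add_le _ _).trans (add_le_add hmd le_rfl)) hγ0.le
  rw [Metric.tendsto_atTop]
  intro ε hε
  set ε1 := min (ε/6) (ε*(1-γ)/(6*γ*(M2+1))) with hε1def
  have hε1pos : 0 < ε1 := lt_min (by positivity) (by positivity)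
  have hε1a : ε1 ≤ ε/6 := min_le_left _ _
  have hε1b : ε1 * M2 * (γ/(1-γ)) ≤ ε/6 := by
    have h0 : ε1 ≤ ε*(1-γ)/(6*γ*(M2+1)) := min_le_right _ _
    have h1 : ε1 * M2 * (γ/(1-γ)) ≤ (ε*(1-γ)/(6*γ*(M2+1))) * M2 * (γ/(1-γ)) :=
      mul_le_mul_of_nonneg_right (mul_le_mul_of_nonneg_right h0 hM2) hγdiv
    refine h1.trans ?_
    have h2 : (ε*(1-γ)/(6*γ*(M2+1))) * M2 * (γ/(1-γ)) = ε*M2/(6*(M2+1)) := by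
      field_simp
    rw [h2, div_le_div_iff₀ (by positivity) (by norm_num)]
    nlinarith [hε.le, hM2]
  obtain ⟨T, hT⟩ := hconv ε1 hε1pos
  obtain ⟨k0, hk0⟩ : ∃ k0 : ℕ, γ^k0 * B2 < ε/6 := by
    have hten := tendsto_pow_atTop_nhds_zero_of_lt_one hγ0.le hγ1
    obtain ⟨k0, hk0⟩ := (hten.eventually
      (eventually_lt_nhds (show (0:ℝ) < ε/6/B2 by positivity))).exists
    exact ⟨k0, by rwa [← lt_div_iff₀ hB2]⟩
  have claim : ∀ k : ℕ, ∀ r : ℝ, 0 < r →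
      |cseq A Q b γ μ r (T + k) - γ/(1-γ) * ∫ n, n ⬝ᵥ (K r).mulVec n ∂μ|
        ≤ γ^k * B2 + ε1 * M2 * (γ/(1-γ)) := by
    intro k
    induction k with
    | zero =>
      intro r hr
      have h := hctb (T+0) r hr
      have hnn : (0:ℝ) ≤ ε1 * M2 * (γ/(1-γ)) := by positivity
      rw [pow_zero, one_mul]
      linarith
    | succ k ih =>
      intro r hr
      have hidx : T + (k+1) = (T+k)+1 := by omega
      rw [hidx]
      have h1 := hrec (T+k) r hr
      have hfr := (hT (T+k) (Nat.le_add_right _ _) r hr).le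
      have h2 : frob (riccatiIter A Q b γ r (T+k) - K r) * M2 ≤ ε1 * M2 :=
        mul_le_mul_of_nonneg_right hfr hM2
      have h3 := ih r hr
      have hid : γ*(ε1*M2) + γ*(ε1 * M2 * (γ/(1-γ))) = ε1*M2*(γ/(1-γ)) := by
        have e1 : ε1*M2 + ε1*M2*(γ/(1-γ)) = (ε1*M2)/(1-γ) := by field_simp; ring
        have e2 : γ*(ε1*M2) + γ*(ε1 * M2 * (γ/(1-γ)))
            = γ * (ε1*M2 + ε1*M2*(γ/(1-γ))) := by ring
        rw [e2, e1]; ring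
      calc |cseq A Q b γ μ r ((T+k)+1) - γ/(1-γ) * ∫ n, n ⬝ᵥ (K r).mulVec n ∂μ|
          ≤ γ * (frob (riccatiIter A Q b γ r (T+k) - K r) * M2
              + |cseq A Q b γ μ r (T+k) - γ/(1-γ) * ∫ n, n ⬝ᵥ (K r).mulVec n ∂μ|) := h1
        _ ≤ γ * (ε1*M2 + (γ^k * B2 + ε1 * M2 * (γ/(1-γ)))) :=
            mul_le_mul_of_nonneg_left (by linarith) hγ0.le
        _ = γ^(k+1)*B2 + (γ*(ε1*M2) + γ*(ε1 * M2 * (γ/(1-γ)))) := by ring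
        _ = γ^(k+1)*B2 + ε1*M2*(γ/(1-γ)) := by rw [hid]
  refine ⟨T + k0 + 1, fun t ht => ?_⟩
  obtain ⟨s, rfl⟩ : ∃ s, t = s + 1 := ⟨t - 1, by omega⟩
  obtain ⟨k, rfl⟩ : ∃ k, s = T + k := ⟨s - T, by omega⟩
  have hkk0 : k0 ≤ k := by omega
  have hdle : distV ((bellmanT A Q b γ μ)^[(T+k)+1] (fun _ _ => 0))
      (fun x r => x ⬝ᵥ (K r).mulVec x + γ / (1 - γ) * ∫ n, n ⬝ᵥ (K r).mulVec n ∂μ)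
      ≤ ε1 + (γ^k0 * B2 + ε/6) := by
    apply distV_le _ _ _ _ hε1pos.le (by positivity)
    intro x r hr
    have hit := iterate_eq hmom hmean A Q b hγ0 hQsym hQpsd (T+k) r hr x
    rw [hit]
    have hquad : x ⬝ᵥ (riccatiIter A Q b γ r (T+k)) *ᵥ x - x ⬝ᵥ (K r) *ᵥ x
        = x ⬝ᵥ ((riccatiIter A Q b γ r (T+k)) - K r) *ᵥ x := by
      simp [sub_mulVec, dotProduct_sub]
    have h1 : |x ⬝ᵥ ((riccatiIter A Q b γ r (T+k)) - K r) *ᵥ x| ≤ ε1 * ∑ i, x i ^2 := by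
      refine (abs_quad_le _ _).trans ?_
      exact mul_le_mul_of_nonneg_right (hT (T+k) (Nat.le_add_right _ _) r hr).le
        (Finset.sum_nonneg fun i _ => sq_nonneg _)
    have h2 := claim k r hr
    have h2' : |cseq A Q b γ μ r (T+k) - γ/(1-γ) * ∫ n, n ⬝ᵥ (K r).mulVec n ∂μ|
        ≤ γ^k0 * B2 + ε/6 := by
      have hp : γ^k * B2 ≤ γ^k0 * B2 :=
        mul_le_mul_of_nonneg_right (pow_le_pow_of_le_one hγ0.le hγ1.le hkk0) hB2.le
      exact h2.trans (add_le_add hp hε1b)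
    calc |(x ⬝ᵥ (riccatiIter A Q b γ r (T+k)) *ᵥ x + cseq A Q b γ μ r (T+k))
          - (x ⬝ᵥ (K r).mulVec x + γ/(1-γ) * ∫ n, n ⬝ᵥ (K r).mulVec n ∂μ)|
        = |x ⬝ᵥ ((riccatiIter A Q b γ r (T+k)) - K r) *ᵥ x
            + (cseq A Q b γ μ r (T+k) - γ/(1-γ) * ∫ n, n ⬝ᵥ (K r).mulVec n ∂μ)| := by
          rw [← hquad]; congr 1; ring
      _ ≤ |x ⬝ᵥ ((riccatiIter A Q b γ r (T+k)) - K r) *ᵥ x|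
            + |cseq A Q b γ μ r (T+k) - γ/(1-γ) * ∫ n, n ⬝ᵥ (K r).mulVec n ∂μ| := abs_add_le _ _
      _ ≤ ε1 * (∑ i, x i ^2) + (γ^k0 * B2 + ε/6) := add_le_add h1 h2'
  have hd0 : 0 ≤ distV ((bellmanT A Q b γ μ)^[(T+k)+1] (fun _ _ => 0))
      (fun x r => x ⬝ᵥ (K r).mulVec x + γ / (1 - γ) * ∫ n, n ⬝ᵥ (K r).mulVec n ∂μ) :=
    ENNReal.toReal_nonneg
  rw [dist_zero_right, Real.norm_eq_abs, abs_of_nonneg hd0]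
  exact lt_of_le_of_lt hdle (by linarith)

end
end

section
/- Let r > 0, let K be a symmetric positive semidefinite solution of the discrete algebraic Riccati equation with penalty r, let u*(x) := −(γ/(γ bᵀK b + r)) bᵀK A x be the optimal stationary feedback, and let D := (I − (γ/(γ bᵀK b + r)) b bᵀ K) A, assumed to have all complex eigenvalues of modulus strictly less than 1. With the state process x_{t+1} := A x_t + b u*(x_t) + n_t = D x_t + n_t, the discounted cost of the optimal policy equals Σ_{t=0}^∞ γ^t E[x_tᵀQ x_t + r u*(x_t)²] = x₀ᵀK x₀ + (γ/(1−γ)) ∫ nᵀK n dμ(n), the series being convergent. -/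
open MeasureTheory Matrix Filter ProbabilityTheory Topology

noncomputable section

/-- The optimal stationary feedback `u*(x) = −(γ/(γ bᵀK b + r)) bᵀK A x`. -/
def optFeedback {d : ℕ} (A : Matrix (Fin d) (Fin d) ℝ) (b : Fin d → ℝ) (γ r : ℝ)
    (K : Matrix (Fin d) (Fin d) ℝ) (x : Fin d → ℝ) : ℝ :=
  -(γ / (γ * (b ⬝ᵥ K.mulVec b) + r)) * (b ⬝ᵥ K.mulVec (A.mulVec x))

/-- The closed-loop matrix `D = (I − (γ/(γ bᵀK b + r)) b bᵀ K) A` of the optimal stationary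
policy. -/
def closedLoop {d : ℕ} (A : Matrix (Fin d) (Fin d) ℝ) (b : Fin d → ℝ) (γ r : ℝ)
    (K : Matrix (Fin d) (Fin d) ℝ) : Matrix (Fin d) (Fin d) ℝ :=
  (1 - (γ / (γ * (b ⬝ᵥ K.mulVec b) + r)) • (vecMulVec b b * K)) * A

section Stability
attribute [local instance] Matrix.linftyOpNormedRing Matrix.linftyOpNormedAlgebra

lemma stable_pow_bound {d : ℕ} (hd : 1 ≤ d) (M : Matrix (Fin d) (Fin d) ℝ)
    (hM : ∀ z ∈ spectrum ℂ (M.map Complex.ofReal), ‖z‖ < 1) :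
    ∃ C ρ : ℝ, 0 ≤ C ∧ 1/2 ≤ ρ ∧ ρ < 1 ∧ ∀ (n : ℕ) (i j : Fin d), |(M ^ n) i j| ≤ C * ρ ^ n := by
  haveI : Nonempty (Fin d) := Fin.pos_iff_nonempty.mp hd
  set Mc : Matrix (Fin d) (Fin d) ℂ := M.map Complex.ofReal with hMc
  have hentry : ∀ (A : Matrix (Fin d) (Fin d) ℂ) (i j : Fin d), ‖A i j‖ ≤ ‖A‖ := by
    intro A i j
    have h1 : ‖A i j‖₊ ≤ ∑ j' : Fin d, ‖A i j'‖₊ :=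
      Finset.single_le_sum (f := fun j' => ‖A i j'‖₊) (fun _ _ => zero_le) (Finset.mem_univ j)
    have h2 : (∑ j' : Fin d, ‖A i j'‖₊) ≤ ‖A‖₊ := by
      rw [Matrix.linfty_opNNNorm_def]
      exact Finset.le_sup (f := fun i => ∑ j' : Fin d, ‖A i j'‖₊) (Finset.mem_univ i)
    exact_mod_cast h1.trans h2
  have hpow : ∀ n : ℕ, Mc ^ n = (M ^ n).map Complex.ofReal := by
    intro n
    have := map_pow (Complex.ofRealHom.mapMatrix :
      Matrix (Fin d) (Fin d) ℝ →+* Matrix (Fin d) (Fin d) ℂ) M n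
    exact this.symm
  have hrad : spectralRadius ℂ Mc < 1 := by
    have h := spectrum.spectralRadius_lt_of_forall_lt (a := Mc) (r := 1)
      (fun z hz => by exact_mod_cast hM z hz)
    simpa using h
  obtain ⟨ρ₀, hρ₀l, hρ₀u⟩ := ENNReal.lt_iff_exists_nnreal_btwn.mp hrad
  have hρ₀lt1 : (ρ₀ : ℝ) < 1 := by exact_mod_cast hρ₀u
  set ρ : ℝ := max (ρ₀ : ℝ) (1/2) with hρdef
  have hρpos : 0 < ρ := lt_of_lt_of_le (by norm_num) (le_max_right _ _)
  have hρlt1 : ρ < 1 := max_lt hρ₀lt1 (by norm_num)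
  have hg := spectrum.pow_nnnorm_pow_one_div_tendsto_nhds_spectralRadius Mc
  have hev : ∀ᶠ (n : ℕ) in atTop, (‖Mc ^ n‖₊ : ENNReal) ^ (1 / (n : ℝ)) < (ρ₀ : ENNReal) :=
    hg.eventually_lt_const hρ₀l
  obtain ⟨N, hN⟩ := eventually_atTop.mp hev
  have key : ∀ n : ℕ, N + 1 ≤ n → ‖Mc ^ n‖ ≤ (ρ₀ : ℝ) ^ n := by
    intro n hn
    have hnpos : 0 < n := by omega
    have hne : (n : ℝ) ≠ 0 := by positivity
    have h1 := (hN n (by omega)).le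
    have h2 := ENNReal.rpow_le_rpow h1 (Nat.cast_nonneg n : (0:ℝ) ≤ n)
    rw [← ENNReal.rpow_mul, one_div_mul_cancel hne, ENNReal.rpow_one,
      ENNReal.rpow_natCast, ← ENNReal.coe_pow, ENNReal.coe_le_coe] at h2
    exact_mod_cast h2
  set C : ℝ := (∑ k ∈ Finset.range (N + 1), ‖Mc ^ k‖ / ρ ^ k) + 1 with hC
  have hsum_nonneg : 0 ≤ ∑ k ∈ Finset.range (N + 1), ‖Mc ^ k‖ / ρ ^ k :=
    Finset.sum_nonneg fun k _ => div_nonneg (norm_nonneg _) (by positivity)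
  have hC1 : 1 ≤ C := by rw [hC]; linarith
  refine ⟨C, ρ, by linarith, le_max_right _ _, hρlt1, ?_⟩
  intro n i j
  have hentry' : |(M ^ n) i j| ≤ ‖Mc ^ n‖ := by
    have h := hentry (Mc ^ n) i j
    rw [hpow n, Matrix.map_apply, Complex.norm_real, Real.norm_eq_abs] at h
    rw [hpow n]
    exact h
  refine hentry'.trans ?_
  rcases le_or_gt n N with h | h
  · have hmem : n ∈ Finset.range (N + 1) := Finset.mem_range.mpr (by omega)
    have h1 : ‖Mc ^ n‖ / ρ ^ n ≤ C := by
      refine le_trans (Finset.single_le_sum (f := fun k => ‖Mc ^ k‖ / ρ ^ k)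
        (fun k _ => div_nonneg (norm_nonneg _) (by positivity)) hmem) (by rw [hC]; linarith)
    calc ‖Mc ^ n‖ = (‖Mc ^ n‖ / ρ ^ n) * ρ ^ n := by field_simp
    _ ≤ C * ρ ^ n := mul_le_mul_of_nonneg_right h1 (by positivity)
  · have h1 : ‖Mc ^ n‖ ≤ (ρ₀ : ℝ) ^ n := key n (by omega)
    have h2 : (ρ₀ : ℝ) ^ n ≤ ρ ^ n :=
      pow_le_pow_left₀ ρ₀.2 (le_max_left _ _) n
    calc ‖Mc ^ n‖ ≤ ρ ^ n := h1.trans h2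
    _ ≤ C * ρ ^ n := le_mul_of_one_le_left (by positivity) hC1

end Stability

section helpersA
variable {d : ℕ}

lemma dot_symm_s11 (K : Matrix (Fin d) (Fin d) ℝ) (hK : Kᵀ = K) (v w : Fin d → ℝ) :
    v ⬝ᵥ K.mulVec w = w ⬝ᵥ K.mulVec v := by
  calc v ⬝ᵥ K.mulVec w = (v ᵥ* K) ⬝ᵥ w := Matrix.dotProduct_mulVec _ _ _
  _ = (v ᵥ* Kᵀᵀ) ⬝ᵥ w := by rw [Matrix.transpose_transpose]
  _ = (Kᵀ *ᵥ v) ⬝ᵥ w := by rw [Matrix.vecMul_transpose]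
  _ = (K *ᵥ v) ⬝ᵥ w := by rw [hK]
  _ = w ⬝ᵥ K *ᵥ v := dotProduct_comm _ _

lemma dot_transpose (A : Matrix (Fin d) (Fin d) ℝ) (y z : Fin d → ℝ) :
    y ⬝ᵥ Aᵀ.mulVec z = (A.mulVec y) ⬝ᵥ z := by
  rw [Matrix.dotProduct_mulVec, Matrix.vecMul_transpose]

lemma vecMulVec_mulVec' (b : Fin d → ℝ) (z : Fin d → ℝ) :
    (vecMulVec b b).mulVec z = (b ⬝ᵥ z) • b := by
  funext i
  simp only [Matrix.mulVec, dotProduct, Matrix.vecMulVec_apply, Pi.smul_apply, smul_eq_mul]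
  rw [Finset.sum_mul]
  exact Finset.sum_congr rfl fun j _ => by ring

/-- closed loop dynamics -/
lemma closedLoop_mulVec (A : Matrix (Fin d) (Fin d) ℝ) (b : Fin d → ℝ) (γ r : ℝ)
    (K : Matrix (Fin d) (Fin d) ℝ) (y : Fin d → ℝ) :
    (closedLoop A b γ r K).mulVec y =
      A.mulVec y + (optFeedback A b γ r K y) • b := by
  rw [closedLoop, ← Matrix.mulVec_mulVec, Matrix.sub_mulVec, Matrix.one_mulVec,
    Matrix.smul_mulVec, ← Matrix.mulVec_mulVec, vecMulVec_mulVec', optFeedback]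
  rw [smul_smul, sub_eq_add_neg, ← neg_smul]
  ring_nf

lemma riccati_pointwise (A Q : Matrix (Fin d) (Fin d) ℝ) (b : Fin d → ℝ) (γ r : ℝ)
    (K : Matrix (Fin d) (Fin d) ℝ) (hK : Kᵀ = K)
    (hs : γ * (b ⬝ᵥ K.mulVec b) + r ≠ 0)
    (hdare : K = riccatiStep A Q b γ r K) (y : Fin d → ℝ) :
    y ⬝ᵥ K.mulVec y =
      (y ⬝ᵥ Q.mulVec y + r * (optFeedback A b γ r K y) ^ 2)
        + γ * ((closedLoop A b γ r K).mulVec y ⬝ᵥ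
            K.mulVec ((closedLoop A b γ r K).mulVec y)) := by
  set β := b ⬝ᵥ K.mulVec b with hβ
  set p := A.mulVec y with hp
  set w := b ⬝ᵥ K.mulVec p with hw
  have hpKb : p ⬝ᵥ K.mulVec b = w := dot_symm_s11 K hK p b
  have hexp : y ⬝ᵥ K.mulVec y
      = y ⬝ᵥ Q.mulVec y + γ * (p ⬝ᵥ K.mulVec p) - γ^2/(γ*β+r) * (w*w) := by
    conv_lhs => rw [hdare]
    rw [riccatiStep, Matrix.add_mulVec, dotProduct_add]
    rw [← Matrix.mulVec_mulVec, ← Matrix.mulVec_mulVec, dot_transpose, ← hp]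
    rw [Matrix.sub_mulVec, Matrix.smul_mulVec, Matrix.smul_mulVec,
      ← Matrix.mulVec_mulVec, ← Matrix.mulVec_mulVec, vecMulVec_mulVec', ← hw,
      Matrix.mulVec_smul, dotProduct_sub]
    simp only [dotProduct_smul, smul_eq_mul, ← hβ]
    rw [hpKb]
    ring
  have hD : (closedLoop A b γ r K).mulVec y = p + (-(γ/(γ*β+r)) * w) • b := by
    rw [closedLoop_mulVec, optFeedback, ← hp, ← hw, ← hβ]
  rw [hD, optFeedback, ← hp, ← hw, ← hβ]
  rw [Matrix.mulVec_add, Matrix.mulVec_smul, dotProduct_add, add_dotProduct,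
    add_dotProduct, dotProduct_smul, smul_dotProduct, smul_dotProduct, hpKb, ← hw]
  simp only [smul_eq_mul, dotProduct_smul, ← hβ]
  rw [hexp]
  field_simp
  ring
end helpersA
def vecSq {d : ℕ} (y : Fin d → ℝ) : ℝ := ∑ i, y i ^ 2

section helpers
variable {d : ℕ}

lemma vecSq_nonneg (y : Fin d → ℝ) : 0 ≤ vecSq y :=
  Finset.sum_nonneg fun _ _ => sq_nonneg _

lemma sum_abs_sq_le (v : Fin d → ℝ) : (∑ j, |v j|) ^ 2 ≤ d * vecSq v := by
  have h := Finset.sum_mul_sq_le_sq_mul_sq Finset.univ (fun _ : Fin d => (1:ℝ))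
    (fun j => |v j|)
  simpa [vecSq, sq_abs, Finset.card_univ] using h

lemma vecSq_mulVec_le {M : Matrix (Fin d) (Fin d) ℝ} {c : ℝ} (hc : 0 ≤ c)
    (h : ∀ i j, |M i j| ≤ c) (v : Fin d → ℝ) :
    vecSq (M.mulVec v) ≤ (d:ℝ)^2 * c^2 * vecSq v := by
  have hcomp : ∀ i, (M.mulVec v i)^2 ≤ c^2 * ((d:ℝ) * vecSq v) := by
    intro i
    have h1 : |M.mulVec v i| ≤ c * ∑ j, |v j| := by
      have he : M.mulVec v i = ∑ j, M i j * v j := by simp [Matrix.mulVec, dotProduct]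
      rw [he]
      calc |∑ j, M i j * v j| ≤ ∑ j, |M i j * v j| := Finset.abs_sum_le_sum_abs _ _
      _ ≤ ∑ j, c * |v j| := Finset.sum_le_sum fun j _ => by
          rw [abs_mul]; exact mul_le_mul_of_nonneg_right (h i j) (abs_nonneg _)
      _ = c * ∑ j, |v j| := (Finset.mul_sum _ _ _).symm
    have h2 : (M.mulVec v i)^2 ≤ (c * ∑ j, |v j|)^2 := by
      rw [← sq_abs (M.mulVec v i)]
      exact pow_le_pow_left₀ (abs_nonneg _) h1 2
    refine h2.trans ?_
    rw [mul_pow]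
    exact mul_le_mul_of_nonneg_left (sum_abs_sq_le v) (by positivity)
  calc vecSq (M.mulVec v) ≤ ∑ _i : Fin d, c^2 * ((d:ℝ) * vecSq v) :=
        Finset.sum_le_sum fun i _ => hcomp i
  _ = (d:ℝ) * (c^2 * ((d:ℝ) * vecSq v)) := by simp [Finset.sum_const, Finset.card_univ]
  _ = (d:ℝ)^2 * c^2 * vecSq v := by ring

lemma vecSq_add_le (v w : Fin d → ℝ) : vecSq (v + w) ≤ 2 * vecSq v + 2 * vecSq w := by
  rw [vecSq, vecSq, vecSq, Finset.mul_sum, Finset.mul_sum, ← Finset.sum_add_distrib]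
  refine Finset.sum_le_sum fun i _ => ?_
  have : (v i + w i)^2 ≤ 2 * v i ^2 + 2 * w i ^2 := by nlinarith [sq_nonneg (v i - w i)]
  simpa using this

lemma measurable_mulVec (M : Matrix (Fin d) (Fin d) ℝ) :
    Measurable (fun v : Fin d → ℝ => M.mulVec v) := by
  refine measurable_pi_lambda _ fun i => ?_
  simp only [Matrix.mulVec, dotProduct]
  exact Finset.measurable_sum _ fun j _ => (measurable_pi_apply j).const_mul _

lemma measurable_dotlin (c : Fin d → ℝ) : Measurable (fun v : Fin d → ℝ => c ⬝ᵥ v) := by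
  simp only [dotProduct]
  exact Finset.measurable_sum _ fun j _ => (measurable_pi_apply j).const_mul _

lemma measurable_vecSq : Measurable (vecSq (d := d)) :=
  Finset.measurable_sum _ fun i _ => (measurable_pi_apply i).pow_const 2

lemma measurable_quadForm (M : Matrix (Fin d) (Fin d) ℝ) :
    Measurable (fun v : Fin d → ℝ => v ⬝ᵥ M.mulVec v) := by
  simp only [dotProduct, Matrix.mulVec]
  exact Finset.measurable_sum _ fun i _ =>
    (measurable_pi_apply i).mul
      (Finset.measurable_sum _ fun j _ => (measurable_pi_apply j).const_mul _)

lemma sq_sum_le_weighted {ι : Type*} (s : Finset ι) (u c : ι → ℝ) (hc : ∀ i ∈ s, 0 < c i) :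
    (∑ i ∈ s, u i) ^ 2 ≤ (∑ i ∈ s, c i) * (∑ i ∈ s, u i ^ 2 / c i) := by
  have h := Finset.sum_mul_sq_le_sq_mul_sq s (fun i => Real.sqrt (c i))
    (fun i => u i / Real.sqrt (c i))
  have h1 : ∀ i ∈ s, Real.sqrt (c i) * (u i / Real.sqrt (c i)) = u i := by
    intro i hi
    field_simp [Real.sqrt_ne_zero'.mpr (hc i hi)]
  have h2 : ∀ i ∈ s, Real.sqrt (c i) ^ 2 = c i := fun i hi => Real.sq_sqrt (hc i hi).le
  have h3 : ∀ i ∈ s, (u i / Real.sqrt (c i)) ^ 2 = u i ^ 2 / c i := by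
    intro i hi
    rw [div_pow, Real.sq_sqrt (hc i hi).le]
  rw [Finset.sum_congr rfl h1, Finset.sum_congr rfl h2, Finset.sum_congr rfl h3] at h
  exact h

lemma vecSq_sum_le {ι : Type*} (s : Finset ι) (z : ι → (Fin d → ℝ)) (c : ι → ℝ)
    (hc : ∀ i ∈ s, 0 < c i) :
    vecSq (∑ k ∈ s, z k) ≤ (∑ k ∈ s, c k) * (∑ k ∈ s, vecSq (z k) / c k) := by
  rw [vecSq]
  calc ∑ i, ((∑ k ∈ s, z k) i) ^ 2 = ∑ i, (∑ k ∈ s, z k i) ^ 2 := by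
        refine Finset.sum_congr rfl fun i _ => by rw [Finset.sum_apply]
  _ ≤ ∑ i : Fin d, (∑ k ∈ s, c k) * (∑ k ∈ s, (z k i) ^ 2 / c k) :=
        Finset.sum_le_sum fun i _ => sq_sum_le_weighted s (fun k => z k i) c hc
  _ = (∑ k ∈ s, c k) * ∑ k ∈ s, vecSq (z k) / c k := by
        rw [← Finset.mul_sum]
        congr 1
        rw [Finset.sum_comm]
        exact Finset.sum_congr rfl fun k _ => by rw [vecSq, Finset.sum_div]
end helpers

lemma measurable_dot_comp {d : ℕ} {α : Type*} [MeasurableSpace α] {f g : α → (Fin d → ℝ)}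
    (hf : Measurable f) (hg : Measurable g) : Measurable fun a => f a ⬝ᵥ g a := by
  simp only [dotProduct]
  exact Finset.measurable_sum _ fun i _ =>
    ((measurable_pi_apply i).comp hf).mul ((measurable_pi_apply i).comp hg)

lemma mulVec_sum {d : ℕ} {ι : Type*} (s : Finset ι) (M : Matrix (Fin d) (Fin d) ℝ)
    (v : ι → (Fin d → ℝ)) : M.mulVec (∑ k ∈ s, v k) = ∑ k ∈ s, M.mulVec (v k) := by
  exact map_sum M.mulVecLin v s

lemma sq_le_vecSq {d : ℕ} (y : Fin d → ℝ) (i : Fin d) : y i ^ 2 ≤ vecSq y :=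
  Finset.single_le_sum (f := fun i => y i ^ 2) (fun _ _ => sq_nonneg _) (Finset.mem_univ i)

lemma abs_mul_abs_le {d : ℕ} (y z : Fin d → ℝ) (i j : Fin d) :
    |y i| * |z j| ≤ vecSq y + vecSq z := by
  nlinarith [sq_le_vecSq y i, sq_le_vecSq z j, sq_nonneg (|y i| - |z j|), sq_abs (y i), sq_abs (z j),
    abs_nonneg (y i), abs_nonneg (z j), vecSq_nonneg y, vecSq_nonneg z]

/-- generic bound on a bilinear form -/
lemma abs_dot_mulVec_le {d : ℕ} (M : Matrix (Fin d) (Fin d) ℝ) (y z : Fin d → ℝ) :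
    |y ⬝ᵥ M.mulVec z| ≤ (∑ i, ∑ j, |M i j|) * (vecSq y + vecSq z) := by
  have h1 : y ⬝ᵥ M.mulVec z = ∑ i, ∑ j, y i * (M i j * z j) := by
    simp [dotProduct, Matrix.mulVec, Finset.mul_sum]
  rw [h1]
  calc |∑ i, ∑ j, y i * (M i j * z j)| ≤ ∑ i, |∑ j, y i * (M i j * z j)| :=
        Finset.abs_sum_le_sum_abs _ _
  _ ≤ ∑ i, ∑ j, |y i * (M i j * z j)| :=
        Finset.sum_le_sum fun i _ => Finset.abs_sum_le_sum_abs _ _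
  _ ≤ ∑ i, ∑ j, |M i j| * (vecSq y + vecSq z) := by
        refine Finset.sum_le_sum fun i _ => Finset.sum_le_sum fun j _ => ?_
        rw [abs_mul, abs_mul]
        calc |y i| * (|M i j| * |z j|) = |M i j| * (|y i| * |z j|) := by ring
        _ ≤ |M i j| * (vecSq y + vecSq z) :=
            mul_le_mul_of_nonneg_left (abs_mul_abs_le y z i j) (abs_nonneg _)
  _ = (∑ i, ∑ j, |M i j|) * (vecSq y + vecSq z) := by
        rw [Finset.sum_mul]
        exact Finset.sum_congr rfl fun i _ => (Finset.sum_mul _ _ _).symm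

lemma abs_mul_le_vecSq {d : ℕ} (y z : Fin d → ℝ) (i j : Fin d) :
    |y i * z j| ≤ vecSq y + vecSq z := by
  rw [abs_mul]
  exact abs_mul_abs_le y z i j



set_option maxHeartbeats 1000000 in
/-- The discounted cost of the optimal stationary policy `u*(x) = −(γ/(γbᵀKb+r)) bᵀKAx` equals
`x₀ᵀK x₀ + (γ/(1−γ)) ∫ nᵀK n dμ`, the series being convergent. -/
theorem optimal_policy_cost_closed_form
    (d : ℕ) (hd : 1 ≤ d)
    (A Q : Matrix (Fin d) (Fin d) ℝ) (b : Fin d → ℝ) (hQ : Q.PosSemidef)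
    (γ : ℝ) (hγ : γ ∈ Set.Ioo (0 : ℝ) 1)
    (μ : Measure (Fin d → ℝ)) [IsProbabilityMeasure μ]
    (hmean : ∀ i, ∫ n, n i ∂μ = 0)
    (hmom : Integrable (fun n => ∑ i, (n i) ^ 2) μ)
    (r : ℝ) (hr : 0 < r)
    (K : Matrix (Fin d) (Fin d) ℝ) (hKpsd : K.PosSemidef)
    (hdare : K = riccatiStep A Q b γ r K)
    (hstable : ∀ z ∈ spectrum ℂ ((closedLoop A b γ r K).map Complex.ofReal), ‖z‖ < 1)
    (Ω : Type) [MeasurableSpace Ω] (P : Measure Ω) [IsProbabilityMeasure P]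
    (noise : ℕ → Ω → (Fin d → ℝ))
    (hmeas : ∀ t, Measurable (noise t))
    (hlaw : ∀ t, Measure.map (noise t) P = μ)
    (hindep : iIndepFun noise P)
    (x₀ : Fin d → ℝ)
    (x : ℕ → Ω → (Fin d → ℝ))
    (hx0 : x 0 = fun _ => x₀)
    (hxrec : ∀ t ω, x (t + 1) ω =
      A.mulVec (x t ω) + (optFeedback A b γ r K (x t ω)) • b + noise t ω) :
    HasSum
      (fun t => γ ^ t *
        ∫ ω, ((x t ω) ⬝ᵥ Q.mulVec (x t ω) + r * (optFeedback A b γ r K (x t ω)) ^ 2) ∂P)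
      (x₀ ⬝ᵥ K.mulVec x₀ + γ / (1 - γ) * ∫ n, n ⬝ᵥ K.mulVec n ∂μ) := by
  obtain ⟨hγ0, hγ1⟩ := hγ
  set D := closedLoop A b γ r K with hDdef
  set V : (Fin d → ℝ) → ℝ := fun y => y ⬝ᵥ K.mulVec y with hVdef
  set m := ∫ n, n ⬝ᵥ K.mulVec n ∂μ with hmdef
  set a : ℕ → ℝ := fun t => ∫ ω, V (x t ω) ∂P with hadef
  set v : ℕ → ℝ := fun t => ∫ ω, V (D.mulVec (x t ω)) ∂P with hvdef
  set f : ℕ → ℝ := fun t => γ ^ t *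
      ∫ ω, ((x t ω) ⬝ᵥ Q.mulVec (x t ω) + r * (optFeedback A b γ r K (x t ω)) ^ 2) ∂P
    with hfdef
  -- basic facts
  have hKsym : Kᵀ = K := by
    ext i j
    have h := congrFun (congrFun hKpsd.1 i) j
    simpa [Matrix.conjTranspose_apply, Matrix.transpose_apply] using h
  have hβ0 : 0 ≤ b ⬝ᵥ K.mulVec b := by simpa using hKpsd.dotProduct_mulVec_nonneg b
  have hs : 0 < γ * (b ⬝ᵥ K.mulVec b) + r := by
    have h := mul_nonneg hγ0.le hβ0
    linarith
  have hstep : ∀ t ω, x (t + 1) ω = D.mulVec (x t ω) + noise t ω := by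
    intro t ω
    rw [hxrec t ω, hDdef, closedLoop_mulVec]
  have hval : ∀ y, V y = (y ⬝ᵥ Q.mulVec y + r * (optFeedback A b γ r K y) ^ 2)
      + γ * V (D.mulVec y) :=
    riccati_pointwise A Q b γ r K hKsym hs.ne' hdare
  have hxm : ∀ t, Measurable (x t) := by
    intro t
    induction t with
    | zero => rw [hx0]; exact measurable_const
    | succ t ih =>
        have he : x (t + 1) = fun ω => D.mulVec (x t ω) + noise t ω := funext (hstep t)
        rw [he]
        exact ((measurable_mulVec D).comp ih).add (hmeas t)
  -- geometric bound on powers of D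
  obtain ⟨C, ρ, hC0, hρh, hρ1, hgeo⟩ := stable_pow_bound hd D hstable
  have hρ0 : (0:ℝ) < ρ := lt_of_lt_of_le (by norm_num) hρh
  set cK := ∑ i, ∑ j, |K i j| with hcKdef
  have hcK0 : 0 ≤ cK := Finset.sum_nonneg fun _ _ => Finset.sum_nonneg fun _ _ => abs_nonneg _
  have hD1 : ∀ i j, |D i j| ≤ C * ρ := by
    intro i j
    have h := hgeo 1 i j
    simpa [pow_one] using h
  have hDvec : ∀ y, vecSq (D.mulVec y) ≤ (d:ℝ)^2*(C*ρ)^2 * vecSq y := fun y =>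
    vecSq_mulVec_le (by positivity) hD1 y
  -- integrability
  have hnint : ∀ t, Integrable (fun ω => vecSq (noise t ω)) P := by
    intro t
    have h1 : Integrable vecSq μ := hmom
    rw [← hlaw t] at h1
    have h2 := (integrable_map_measure measurable_vecSq.aestronglyMeasurable
      (hmeas t).aemeasurable).mp h1
    exact h2
  have hmargeq : ∀ (g : (Fin d → ℝ) → ℝ), Measurable g →
      ∀ t, ∫ ω, g (noise t ω) ∂P = ∫ n, g n ∂μ := by
    intro g hg t
    rw [← hlaw t, integral_map (hmeas t).aemeasurable hg.aestronglyMeasurable]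
  have hxint : ∀ t, Integrable (fun ω => vecSq (x t ω)) P := by
    intro t
    induction t with
    | zero =>
        have he : (fun ω => vecSq (x 0 ω)) = fun _ => vecSq x₀ := by
          funext ω; rw [hx0]
        rw [he]; exact integrable_const _
    | succ t ih =>
        have hmaj : Integrable
            (fun ω => 2 * ((d:ℝ)^2*(C*ρ)^2 * vecSq (x t ω)) + 2 * vecSq (noise t ω)) P :=
          ((ih.const_mul _).const_mul 2).add ((hnint t).const_mul 2)
        refine hmaj.mono' ((measurable_vecSq.comp (hxm (t+1))).aestronglyMeasurable) ?_
        refine Eventually.of_forall fun ω => ?_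
        simp only [Real.norm_eq_abs]
        rw [abs_of_nonneg (vecSq_nonneg _), hstep t ω]
        calc vecSq (D.mulVec (x t ω) + noise t ω)
            ≤ 2 * vecSq (D.mulVec (x t ω)) + 2 * vecSq (noise t ω) := vecSq_add_le _ _
        _ ≤ 2 * ((d:ℝ)^2*(C*ρ)^2 * vecSq (x t ω)) + 2 * vecSq (noise t ω) := by
            have := hDvec (x t ω)
            linarith
  have hxDint : ∀ t, Integrable (fun ω => vecSq (D.mulVec (x t ω))) P := by
    intro t
    refine (((hxint t).const_mul ((d:ℝ)^2*(C*ρ)^2)).mono'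
      ((measurable_vecSq.comp ((measurable_mulVec D).comp (hxm t))).aestronglyMeasurable)) ?_
    refine Eventually.of_forall fun ω => ?_
    simp only [Real.norm_eq_abs, Function.comp]
    rw [abs_of_nonneg (vecSq_nonneg _)]
    exact hDvec (x t ω)
  have hquadg : ∀ (g : Ω → (Fin d → ℝ)), Measurable g →
      Integrable (fun ω => vecSq (g ω)) P → Integrable (fun ω => V (g ω)) P := by
    intro g hgm hgint
    refine ((hgint.const_mul (2 * cK)).mono'
      (((measurable_quadForm K).comp hgm).aestronglyMeasurable)) ?_
    refine Eventually.of_forall fun ω => ?_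
    simp only [Real.norm_eq_abs]
    have h := abs_dot_mulVec_le K (g ω) (g ω)
    rw [← hcKdef] at h
    calc |V (g ω)| ≤ cK * (vecSq (g ω) + vecSq (g ω)) := h
    _ = 2 * cK * vecSq (g ω) := by ring
  have hVxint : ∀ t, Integrable (fun ω => V (x t ω)) P := fun t => hquadg _ (hxm t) (hxint t)
  have hVDxint : ∀ t, Integrable (fun ω => V (D.mulVec (x t ω))) P := fun t =>
    hquadg _ ((measurable_mulVec D).comp (hxm t)) (hxDint t)
  -- per-step identities
  have hcostE : ∀ t, (∫ ω, ((x t ω) ⬝ᵥ Q.mulVec (x t ω)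
      + r * (optFeedback A b γ r K (x t ω)) ^ 2) ∂P) = a t - γ * v t := by
    intro t
    have hpt : ∀ ω, (x t ω) ⬝ᵥ Q.mulVec (x t ω) + r * (optFeedback A b γ r K (x t ω)) ^ 2
        = V (x t ω) - γ * V (D.mulVec (x t ω)) := by
      intro ω
      have h := hval (x t ω)
      linarith
    calc ∫ ω, ((x t ω) ⬝ᵥ Q.mulVec (x t ω) + r * (optFeedback A b γ r K (x t ω)) ^ 2) ∂P
        = ∫ ω, (V (x t ω) - γ * V (D.mulVec (x t ω))) ∂P :=
          integral_congr_ae (Eventually.of_forall fun ω => hpt ω)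
    _ = (∫ ω, V (x t ω) ∂P) - ∫ ω, γ * V (D.mulVec (x t ω)) ∂P :=
          integral_sub (hVxint t) ((hVDxint t).const_mul γ)
    _ = a t - γ * v t := by rw [integral_const_mul]
  have hrep : ∀ t, ∃ g : ((Fin t) → (Fin d → ℝ)) → (Fin d → ℝ),
      Measurable g ∧ ∀ ω, x t ω = g (fun i => noise i ω) := by
    intro t
    induction t with
    | zero => exact ⟨fun _ => x₀, measurable_const, fun ω => by rw [hx0]⟩
    | succ t ih =>
        obtain ⟨g, hgm, hgx⟩ := ih
        refine ⟨fun h => D.mulVec (g (fun i : Fin t => h i.castSucc)) + h (Fin.last t),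
          ((measurable_mulVec D).comp (hgm.comp
            (measurable_pi_lambda _ fun i => measurable_pi_apply _))).add
            (measurable_pi_apply _), fun ω => ?_⟩
        rw [hstep t ω, hgx ω]
        rfl
  have hindepxn : ∀ t, IndepFun (x t) (noise t) P := by
    intro t
    obtain ⟨g, hgm, hgx⟩ := hrep t
    have hdis : Disjoint (Finset.range t) ({t} : Finset ℕ) := by simp
    have hbase := hindep.indepFun_finset (Finset.range t) {t} hdis hmeas
    have hφm : Measurable (fun h : (↥(Finset.range t) → (Fin d → ℝ)) =>
        g (fun i : Fin t => h ⟨(i : ℕ), Finset.mem_range.mpr i.2⟩)) :=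
      hgm.comp (measurable_pi_lambda _ fun i => measurable_pi_apply _)
    have hψm : Measurable (fun h : (↥({t} : Finset ℕ) → (Fin d → ℝ)) =>
        h ⟨t, Finset.mem_singleton_self t⟩) := measurable_pi_apply _
    have hcomp := hbase.comp hφm hψm
    have hx : ((fun h : (↥(Finset.range t) → (Fin d → ℝ)) =>
        g (fun i : Fin t => h ⟨(i : ℕ), Finset.mem_range.mpr i.2⟩))
          ∘ (fun a (i : ↥(Finset.range t)) => noise i a)) = x t := by
      funext ω
      exact (hgx ω).symm
    have hn : ((fun h : (↥({t} : Finset ℕ) → (Fin d → ℝ)) =>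
        h ⟨t, Finset.mem_singleton_self t⟩)
          ∘ (fun a (i : ↥({t} : Finset ℕ)) => noise i a)) = noise t := by
      funext ω
      rfl
    rw [hx, hn] at hcomp
    exact hcomp
  have hprodint : ∀ t (i j : Fin d),
      Integrable (fun ω => (D.mulVec (x t ω)) i * noise t ω j) P := by
    intro t i j
    refine ((hxDint t).add (hnint t)).mono' ?_ ?_
    · exact (((measurable_pi_apply i).comp ((measurable_mulVec D).comp (hxm t))).mul
        ((measurable_pi_apply j).comp (hmeas t))).aestronglyMeasurable
    · refine Eventually.of_forall fun ω => ?_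
      simp only [Real.norm_eq_abs, Pi.add_apply]
      exact abs_mul_le_vecSq _ _ i j
  have hcross : ∀ t, ∫ ω, ((D.mulVec (x t ω)) ⬝ᵥ K.mulVec (noise t ω)) ∂P = 0 := by
    intro t
    have hexp : ∀ ω, (D.mulVec (x t ω)) ⬝ᵥ K.mulVec (noise t ω)
        = ∑ i, ∑ j, K i j * ((D.mulVec (x t ω)) i * noise t ω j) := by
      intro ω
      have h0 : (D.mulVec (x t ω)) ⬝ᵥ K.mulVec (noise t ω)
          = ∑ i, (D.mulVec (x t ω)) i * (∑ j, K i j * noise t ω j) := by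
        simp [dotProduct, Matrix.mulVec]
      rw [h0]
      refine Finset.sum_congr rfl fun i _ => ?_
      rw [Finset.mul_sum]
      exact Finset.sum_congr rfl fun j _ => by ring
    have hzero : ∀ (i j : Fin d), ∫ ω, ((D.mulVec (x t ω)) i * noise t ω j) ∂P = 0 := by
      intro i j
      have hIF : IndepFun (fun ω => (D.mulVec (x t ω)) i) (fun ω => noise t ω j) P :=
        (hindepxn t).comp ((measurable_pi_apply i).comp (measurable_mulVec D))
          (measurable_pi_apply j)
      have h2 := hIF.integral_mul_eq_mul_integral
        (((measurable_pi_apply i).comp ((measurable_mulVec D).comp (hxm t))).aestronglyMeasurable)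
        (((measurable_pi_apply j).comp (hmeas t)).aestronglyMeasurable)
      have h3 : ∫ ω, noise t ω j ∂P = 0 := by
        have h := hmargeq (fun n => n j) (measurable_pi_apply j) t
        rw [h, hmean j]
      calc ∫ ω, ((D.mulVec (x t ω)) i * noise t ω j) ∂P
          = (∫ ω, (D.mulVec (x t ω)) i ∂P) * ∫ ω, noise t ω j ∂P := h2
      _ = 0 := by rw [h3, mul_zero]
    rw [integral_congr_ae (Eventually.of_forall hexp),
      integral_finset_sum _ (fun i _ =>
        integrable_finset_sum _ (fun j _ => (hprodint t i j).const_mul (K i j)))]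
    refine Finset.sum_eq_zero fun i _ => ?_
    rw [integral_finset_sum _ (fun j _ => (hprodint t i j).const_mul (K i j))]
    refine Finset.sum_eq_zero fun j _ => ?_
    rw [integral_const_mul, hzero i j, mul_zero]
  have hstepE : ∀ t, a (t + 1) = v t + m := by
    intro t
    have hpt : ∀ ω, V (x (t + 1) ω) = V (D.mulVec (x t ω))
        + 2 * ((D.mulVec (x t ω)) ⬝ᵥ K.mulVec (noise t ω)) + V (noise t ω) := by
      intro ω
      rw [hstep t ω]
      simp only [hVdef]
      have h2 : (noise t ω) ⬝ᵥ K.mulVec (D.mulVec (x t ω))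
          = (D.mulVec (x t ω)) ⬝ᵥ K.mulVec (noise t ω) :=
        dot_symm_s11 K hKsym (noise t ω) (D.mulVec (x t ω))
      rw [Matrix.mulVec_add, dotProduct_add, add_dotProduct, add_dotProduct, h2]
      ring
    have hg2int : Integrable (fun ω => (D.mulVec (x t ω)) ⬝ᵥ K.mulVec (noise t ω)) P := by
      refine (((hxDint t).add (hnint t)).const_mul cK).mono' ?_ ?_
      · exact (measurable_dot_comp ((measurable_mulVec D).comp (hxm t))
          ((measurable_mulVec K).comp (hmeas t))).aestronglyMeasurable
      · refine Eventually.of_forall fun ω => ?_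
        simp only [Real.norm_eq_abs, Pi.add_apply]
        have h := abs_dot_mulVec_le K (D.mulVec (x t ω)) (noise t ω)
        rw [← hcKdef] at h
        exact h
    have hg3int : Integrable (fun ω => V (noise t ω)) P := hquadg (noise t) (hmeas t) (hnint t)
    have hsplit : a (t + 1) = v t + 2 * (∫ ω, ((D.mulVec (x t ω)) ⬝ᵥ K.mulVec (noise t ω)) ∂P)
        + ∫ ω, V (noise t ω) ∂P := by
      simp only [hadef, hvdef]
      calc ∫ ω, V (x (t + 1) ω) ∂P
          = ∫ ω, (V (D.mulVec (x t ω)) + 2 * ((D.mulVec (x t ω)) ⬝ᵥ K.mulVec (noise t ω))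
              + V (noise t ω)) ∂P := integral_congr_ae (Eventually.of_forall hpt)
      _ = (∫ ω, (V (D.mulVec (x t ω))
              + 2 * ((D.mulVec (x t ω)) ⬝ᵥ K.mulVec (noise t ω))) ∂P)
            + ∫ ω, V (noise t ω) ∂P :=
          integral_add ((hVDxint t).add (hg2int.const_mul 2)) hg3int
      _ = ((∫ ω, V (D.mulVec (x t ω)) ∂P)
            + ∫ ω, 2 * ((D.mulVec (x t ω)) ⬝ᵥ K.mulVec (noise t ω)) ∂P)
            + ∫ ω, V (noise t ω) ∂P := by
          rw [integral_add (hVDxint t) (hg2int.const_mul 2)]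
      _ = _ := by rw [integral_const_mul]
    rw [hsplit, hcross t]
    have hm' : ∫ ω, V (noise t ω) ∂P = m := by
      simp only [hVdef, hmdef]
      exact hmargeq (fun n => n ⬝ᵥ K.mulVec n) (measurable_quadForm K) t
    rw [hm']
    ring
  have ha0 : a 0 = x₀ ⬝ᵥ K.mulVec x₀ := by
    have he : (fun ω => V (x 0 ω)) = fun _ => x₀ ⬝ᵥ K.mulVec x₀ := by
      funext ω; rw [hx0]
    rw [hadef]
    simp only [he]
    simp
  -- uniform bound
  -- explicit solution
  have hsol : ∀ t ω, x t ω = (D ^ t).mulVec x₀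
      + ∑ k ∈ Finset.range t, (D ^ (t - 1 - k)).mulVec (noise k ω) := by
    intro t
    induction t with
    | zero => intro ω; simp [hx0, Matrix.one_mulVec]
    | succ t ih =>
        intro ω
        rw [hstep t ω, ih ω, Matrix.mulVec_add, _root_.mulVec_sum, Matrix.mulVec_mulVec,
          Finset.sum_range_succ]
        have h1 : D * D ^ t = D ^ (t + 1) := (pow_succ' D t).symm
        rw [h1]
        have h2 : ∀ k ∈ Finset.range t, D.mulVec ((D ^ (t - 1 - k)).mulVec (noise k ω))
            = (D ^ (t + 1 - 1 - k)).mulVec (noise k ω) := by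
          intro k hk
          have hk' : k < t := Finset.mem_range.mp hk
          rw [Matrix.mulVec_mulVec]
          have h3 : D * D ^ (t - 1 - k) = D ^ (t - 1 - k + 1) := (pow_succ' D _).symm
          rw [h3]
          have h4 : t - 1 - k + 1 = t + 1 - 1 - k := by omega
          rw [h4]
        rw [Finset.sum_congr rfl h2]
        have h5 : t + 1 - 1 - t = 0 := by omega
        rw [h5, pow_zero, Matrix.one_mulVec]
        abel
  set σ2 := ∫ n, vecSq n ∂μ with hσ2def
  have hσ20 : 0 ≤ σ2 := integral_nonneg fun n => vecSq_nonneg n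
  have hnmean : ∀ t, ∫ ω, vecSq (noise t ω) ∂P = σ2 := fun t =>
    hmargeq vecSq measurable_vecSq t
  set R := (1 - ρ)⁻¹ with hRdef
  have hR0 : 0 < R := by rw [hRdef]; exact inv_pos.mpr (by linarith)
  have hgeosum : ∀ T, (∑ j ∈ Finset.range T, ρ ^ j) ≤ R := by
    intro T
    rw [hRdef]
    have h := Summable.sum_le_tsum (Finset.range T) (fun j _ => by positivity)
      (summable_geometric_of_lt_one hρ0.le hρ1)
    rwa [tsum_geometric_of_lt_one hρ0.le hρ1] at h
  set L := (d:ℝ)^2 * C^2 with hLdef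
  have hL0 : 0 ≤ L := by rw [hLdef]; positivity
  have hpowvec : ∀ (e : ℕ) (y : Fin d → ℝ),
      vecSq ((D ^ e).mulVec y) ≤ L * (ρ^2)^e * vecSq y := by
    intro e y
    have h := vecSq_mulVec_le (M := D ^ e) (c := C * ρ ^ e) (by positivity)
      (fun i j => hgeo e i j) y
    calc vecSq ((D ^ e).mulVec y) ≤ (d:ℝ)^2 * (C * ρ ^ e)^2 * vecSq y := h
    _ = L * (ρ^2)^e * vecSq y := by rw [hLdef]; ring
  have hptb : ∀ t ω, vecSq (x t ω) ≤ 2 * L * vecSq x₀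
      + 2 * R * L * ∑ k ∈ Finset.range t, ρ ^ (t - 1 - k) * vecSq (noise k ω) := by
    intro t ω
    rw [hsol t ω]
    refine (vecSq_add_le _ _).trans ?_
    have hA : vecSq ((D ^ t).mulVec x₀) ≤ L * vecSq x₀ := by
      have h2 : (ρ^2)^t ≤ 1 := pow_le_one₀ (by positivity) (by nlinarith)
      calc vecSq ((D ^ t).mulVec x₀) ≤ L * (ρ^2)^t * vecSq x₀ := hpowvec t x₀
      _ ≤ L * 1 * vecSq x₀ :=
          mul_le_mul_of_nonneg_right (mul_le_mul_of_nonneg_left h2 hL0) (vecSq_nonneg x₀)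
      _ = L * vecSq x₀ := by ring
    have hSsum : vecSq (∑ k ∈ Finset.range t, (D ^ (t - 1 - k)).mulVec (noise k ω))
        ≤ R * (L * ∑ k ∈ Finset.range t, ρ ^ (t - 1 - k) * vecSq (noise k ω)) := by
      have h := vecSq_sum_le (Finset.range t) (fun k => (D ^ (t - 1 - k)).mulVec (noise k ω))
        (fun k => ρ ^ (t - 1 - k)) (fun k _ => by positivity)
      refine h.trans ?_
      have hc1 : (∑ k ∈ Finset.range t, ρ ^ (t - 1 - k)) ≤ R := by
        rw [Finset.sum_range_reflect (fun j => ρ ^ j) t]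
        exact hgeosum t
      have hc2 : (∑ k ∈ Finset.range t,
            vecSq ((D ^ (t - 1 - k)).mulVec (noise k ω)) / ρ ^ (t - 1 - k))
          ≤ L * ∑ k ∈ Finset.range t, ρ ^ (t - 1 - k) * vecSq (noise k ω) := by
        rw [Finset.mul_sum]
        refine Finset.sum_le_sum fun k _ => ?_
        rw [div_le_iff₀ (by positivity)]
        have hsq : (ρ^2)^(t - 1 - k) = ρ ^ (t - 1 - k) * ρ ^ (t - 1 - k) := by
          rw [← pow_add, ← pow_mul]
          ring_nf
        calc vecSq ((D ^ (t - 1 - k)).mulVec (noise k ω))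
            ≤ L * (ρ^2)^(t - 1 - k) * vecSq (noise k ω) := hpowvec _ _
        _ = L * (ρ ^ (t - 1 - k) * vecSq (noise k ω)) * ρ ^ (t - 1 - k) := by
            rw [hsq]; ring
      have h0a : 0 ≤ ∑ k ∈ Finset.range t,
          vecSq ((D ^ (t - 1 - k)).mulVec (noise k ω)) / ρ ^ (t - 1 - k) :=
        Finset.sum_nonneg fun k _ => div_nonneg (vecSq_nonneg _) (by positivity)
      exact mul_le_mul hc1 hc2 h0a hR0.le
    nlinarith [hA, hSsum]
  set B := 2 * L * vecSq x₀ + 2 * R * L * (R * σ2) with hBdef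
  have hB0 : 0 ≤ B := by
    have h1 : 0 ≤ 2 * L * vecSq x₀ :=
      mul_nonneg (mul_nonneg (by norm_num) hL0) (vecSq_nonneg x₀)
    have h2 : 0 ≤ 2 * R * L * (R * σ2) :=
      mul_nonneg (mul_nonneg (mul_nonneg (by norm_num) hR0.le) hL0)
        (mul_nonneg hR0.le hσ20)
    linarith
  have hSB : ∀ t, ∫ ω, vecSq (x t ω) ∂P ≤ B := by
    intro t
    have hsumint : Integrable
        (fun ω => ∑ k ∈ Finset.range t, ρ ^ (t - 1 - k) * vecSq (noise k ω)) P :=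
      integrable_finset_sum _ fun k _ => (hnint k).const_mul _
    have h1 : ∫ ω, vecSq (x t ω) ∂P ≤ ∫ ω, (2 * L * vecSq x₀
        + 2 * R * L * ∑ k ∈ Finset.range t, ρ ^ (t - 1 - k) * vecSq (noise k ω)) ∂P :=
      integral_mono (hxint t) ((integrable_const _).add (hsumint.const_mul _))
        (fun ω => hptb t ω)
    refine h1.trans ?_
    rw [integral_add (integrable_const _) (hsumint.const_mul _), integral_const,
      integral_const_mul]
    have h2 : ∫ ω, (∑ k ∈ Finset.range t, ρ ^ (t - 1 - k) * vecSq (noise k ω)) ∂P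
        = ∑ k ∈ Finset.range t, ρ ^ (t - 1 - k) * σ2 := by
      rw [integral_finset_sum _ (fun k _ => (hnint k).const_mul _)]
      refine Finset.sum_congr rfl fun k _ => ?_
      rw [integral_const_mul, hnmean k]
    rw [h2]
    have h3 : (∑ k ∈ Finset.range t, ρ ^ (t - 1 - k) * σ2) ≤ R * σ2 := by
      rw [← Finset.sum_mul]
      refine mul_le_mul_of_nonneg_right ?_ hσ20
      rw [Finset.sum_range_reflect (fun j => ρ ^ j) t]
      exact hgeosum t
    have h4 : (2 * R * L) * (∑ k ∈ Finset.range t, ρ ^ (t - 1 - k) * σ2)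
        ≤ (2 * R * L) * (R * σ2) := mul_le_mul_of_nonneg_left h3
          (mul_nonneg (mul_nonneg (by norm_num) hR0.le) hL0)
    simp only [measure_univ, ENNReal.toReal_one, smul_eq_mul, one_mul, probReal_univ]
    rw [hBdef]
    linarith
  obtain ⟨Ca, hCa0, hCa⟩ : ∃ Ca : ℝ, 0 ≤ Ca ∧ ∀ t, |a t| ≤ Ca := by
    refine ⟨2 * cK * B, mul_nonneg (mul_nonneg (by norm_num) hcK0) hB0, fun t => ?_⟩
    have h1 : |a t| ≤ ∫ ω, |V (x t ω)| ∂P := by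
      rw [hadef]
      simpa [Real.norm_eq_abs] using
        norm_integral_le_integral_norm (μ := P) (fun ω => V (x t ω))
    have h2 : ∫ ω, |V (x t ω)| ∂P ≤ ∫ ω, (2 * cK * vecSq (x t ω)) ∂P := by
      refine integral_mono (hVxint t).abs ((hxint t).const_mul _) fun ω => ?_
      have h := abs_dot_mulVec_le K (x t ω) (x t ω)
      rw [← hcKdef] at h
      calc |V (x t ω)| ≤ cK * (vecSq (x t ω) + vecSq (x t ω)) := h
      _ = 2 * cK * vecSq (x t ω) := by ring
    have h3 : ∫ ω, (2 * cK * vecSq (x t ω)) ∂P = 2 * cK * ∫ ω, vecSq (x t ω) ∂P :=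
      integral_const_mul _ _
    have h4 : 2 * cK * (∫ ω, vecSq (x t ω) ∂P) ≤ 2 * cK * B :=
      mul_le_mul_of_nonneg_left (hSB t) (mul_nonneg (by norm_num) hcK0)
    linarith
  -- series representation
  have hfeq : ∀ t, f t = (γ ^ t * a t - γ ^ (t + 1) * a (t + 1)) + γ ^ (t + 1) * m := by
    intro t
    simp only [hfdef]
    rw [hcostE t]
    have hv : v t = a (t + 1) - m := by rw [hstepE t]; ring
    rw [hv]
    ring
  have hCm : ∀ t, |f t| ≤ (Ca + γ * Ca + γ * |m|) * γ ^ t := by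
    intro t
    rw [hfeq t]
    have e1 : |γ ^ t * a t| = γ ^ t * |a t| := by
      rw [abs_mul, abs_of_nonneg (by positivity : (0:ℝ) ≤ γ ^ t)]
    have e2 : |γ ^ (t + 1) * a (t + 1)| = γ ^ (t + 1) * |a (t + 1)| := by
      rw [abs_mul, abs_of_nonneg (by positivity : (0:ℝ) ≤ γ ^ (t + 1))]
    have e3 : |γ ^ (t + 1) * m| = γ ^ (t + 1) * |m| := by
      rw [abs_mul, abs_of_nonneg (by positivity : (0:ℝ) ≤ γ ^ (t + 1))]
    have h1 : |γ ^ t * a t - γ ^ (t + 1) * a (t + 1) + γ ^ (t + 1) * m|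
        ≤ γ ^ t * |a t| + γ ^ (t + 1) * |a (t + 1)| + γ ^ (t + 1) * |m| := by
      calc |γ ^ t * a t - γ ^ (t + 1) * a (t + 1) + γ ^ (t + 1) * m|
          ≤ |γ ^ t * a t - γ ^ (t + 1) * a (t + 1)| + |γ ^ (t + 1) * m| := abs_add_le _ _
      _ ≤ |γ ^ t * a t| + |γ ^ (t + 1) * a (t + 1)| + |γ ^ (t + 1) * m| := by
          have := abs_sub (γ ^ t * a t) (γ ^ (t + 1) * a (t + 1))
          linarith
      _ = _ := by rw [e1, e2, e3]
    refine h1.trans ?_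
    have h3 := hCa t
    have h4 := hCa (t + 1)
    have h5 : (0:ℝ) ≤ γ ^ t := by positivity
    have b1 : γ ^ t * |a t| ≤ γ ^ t * Ca := mul_le_mul_of_nonneg_left h3 h5
    have b2 : γ ^ (t + 1) * |a (t + 1)| ≤ γ ^ (t + 1) * Ca :=
      mul_le_mul_of_nonneg_left h4 (by positivity)
    have hg : γ ^ (t + 1) = γ * γ ^ t := by ring
    rw [hg] at b2 ⊢
    have hmm : (0:ℝ) ≤ γ * γ ^ t * |m| := by positivity
    ring_nf
    ring_nf at b1 b2 hmm
    linarith [b1, b2, hmm]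
  have hsummable : Summable f := by
    refine Summable.of_norm ?_
    refine Summable.of_nonneg_of_le (fun t => norm_nonneg _) (fun t => ?_)
      ((summable_geometric_of_lt_one hγ0.le hγ1).mul_left (Ca + γ * Ca + γ * |m|))
    simpa using hCm t
  -- partial sums
  have hpartial : ∀ T, ∑ t ∈ Finset.range T, f t
      = (a 0 - γ ^ T * a T) + m * (γ * ∑ t ∈ Finset.range T, γ ^ t) := by
    intro T
    have h1 : ∑ t ∈ Finset.range T, f t
        = (∑ t ∈ Finset.range T, (γ ^ t * a t - γ ^ (t + 1) * a (t + 1)))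
          + ∑ t ∈ Finset.range T, γ ^ (t + 1) * m := by
      rw [← Finset.sum_add_distrib]
      exact Finset.sum_congr rfl fun t _ => hfeq t
    rw [h1, Finset.sum_range_sub' (fun t => γ ^ t * a t)]
    simp only [pow_zero, one_mul]
    rw [Finset.mul_sum, Finset.mul_sum]
    congr 1
    exact Finset.sum_congr rfl fun t _ => by ring
  have htend : Tendsto (fun T => ∑ t ∈ Finset.range T, f t) atTop
      (𝓝 (x₀ ⬝ᵥ K.mulVec x₀ + γ / (1 - γ) * m)) := by
    have h1 : Tendsto (fun T => γ ^ T * a T) atTop (𝓝 0) := by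
      apply squeeze_zero_norm (fun T => ?_)
        (by simpa using (tendsto_pow_atTop_nhds_zero_of_lt_one hγ0.le hγ1).const_mul Ca)
      · calc ‖γ ^ T * a T‖ = γ ^ T * |a T| := by
              rw [norm_mul, Real.norm_eq_abs, Real.norm_eq_abs,
                abs_of_nonneg (by positivity : (0:ℝ) ≤ γ ^ T)]
        _ ≤ γ ^ T * Ca := mul_le_mul_of_nonneg_left (hCa T) (by positivity)
        _ = Ca * γ ^ T := by ring
    have h2 : Tendsto (fun T => ∑ t ∈ Finset.range T, γ ^ t) atTop (𝓝 (1 - γ)⁻¹) :=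
      (hasSum_geometric_of_lt_one hγ0.le hγ1).tendsto_sum_nat
    have h3 : Tendsto (fun T => (a 0 - γ ^ T * a T) + m * (γ * ∑ t ∈ Finset.range T, γ ^ t))
        atTop (𝓝 ((a 0 - 0) + m * (γ * (1 - γ)⁻¹))) :=
      ((tendsto_const_nhds.sub h1).add (((h2.const_mul γ).const_mul m)))
    have h4 : (a 0 - 0) + m * (γ * (1 - γ)⁻¹) = x₀ ⬝ᵥ K.mulVec x₀ + γ / (1 - γ) * m := by
      rw [ha0]; ring
    rw [h4] at h3
    exact h3.congr (fun T => (hpartial T).symm)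
  have hfin := hsummable.hasSum
  have := tendsto_nhds_unique hfin.tendsto_sum_nat htend
  rw [this] at hfin
  exact hfin
end
end

section
/- Under the coupled Riccati relations, for each i ∈ {1,2} and every x ∈ ℝ^d, setting Ã_i := A − b^{−i} p_{−i}ᵀ, the equilibrium value satisfies the Bellman best-response identity xᵀK^i x = xᵀQ_i x + inf_{u∈ℝ} ( r u² + γ (Ã_i x + b^i u)ᵀ K^i (Ã_i x + b^i u) ), and the infimum is attained uniquely at u = −p_iᵀ x (the opposing player being held at its Nash feedback). -/
open Matrix

noncomputable section

/-- The closed-loop matrix `F = A − b¹p₁ᵀ − b²p₂ᵀ` of the feedback Nash equilibrium. -/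
def gameF {d : ℕ} (A : Matrix (Fin d) (Fin d) ℝ) (b p : Fin 2 → Fin d → ℝ) :
    Matrix (Fin d) (Fin d) ℝ :=
  A - vecMulVec (b 0) (p 0) - vecMulVec (b 1) (p 1)

/-- The coupled Riccati relations of the two-player linear–quadratic dynamic game:
`γ (bⁱ)ᵀKⁱA = (r + γ(bⁱ)ᵀKⁱbⁱ) pᵢᵀ + γ(bⁱ)ᵀKⁱb⁻ⁱ p₋ᵢᵀ` and
`Kⁱ = γ FᵀKⁱF + r pᵢpᵢᵀ + Qᵢ`, with each `Kⁱ` symmetric positive semidefinite. -/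
def coupledRiccati {d : ℕ} (A : Matrix (Fin d) (Fin d) ℝ) (b : Fin 2 → Fin d → ℝ)
    (Q : Fin 2 → Matrix (Fin d) (Fin d) ℝ) (r γ : ℝ)
    (p : Fin 2 → Fin d → ℝ) (K : Fin 2 → Matrix (Fin d) (Fin d) ℝ) : Prop :=
  (∀ i, (K i).PosSemidef) ∧
  (∀ i j, j ≠ i →
    γ • Matrix.vecMul (Matrix.vecMul (b i) (K i)) A =
      (r + γ * (b i ⬝ᵥ (K i).mulVec (b i))) • p i +
        (γ * (b i ⬝ᵥ (K i).mulVec (b j))) • p j) ∧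
  (∀ i, K i = γ • ((gameF A b p)ᵀ * K i * gameF A b p) + r • vecMulVec (p i) (p i) + Q i)

lemma myVecMulVec_mulVec {d : ℕ} (w u x : Fin d → ℝ) :
    (vecMulVec w u) *ᵥ x = (u ⬝ᵥ x) • w := by
  ext k
  simp only [mulVec, vecMulVec_apply, dotProduct, Pi.smul_apply, smul_eq_mul, Finset.sum_mul]
  exact Finset.sum_congr rfl fun l _ => by ring

/-- Bellman best-response correspondence at the Nash equilibrium: with the other player held at
its Nash feedback and `Ãᵢ = A − b⁻ⁱp₋ᵢᵀ`,
`xᵀKⁱx = xᵀQᵢx + inf_u ( r u² + γ(Ãᵢx + bⁱu)ᵀKⁱ(Ãᵢx + bⁱu) )`, the infimum being attained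
uniquely at `u = −pᵢᵀx`. -/
theorem bellman_best_response
    (d : ℕ) (hd : 1 ≤ d)
    (A : Matrix (Fin d) (Fin d) ℝ) (b : Fin 2 → Fin d → ℝ)
    (Q : Fin 2 → Matrix (Fin d) (Fin d) ℝ) (hQ : ∀ i, (Q i).PosSemidef)
    (r : ℝ) (hr : 0 < r)
    (γ : ℝ) (hγ : γ ∈ Set.Ioo (0 : ℝ) 1)
    (p : Fin 2 → Fin d → ℝ) (K : Fin 2 → Matrix (Fin d) (Fin d) ℝ)
    (hcr : coupledRiccati A b Q r γ p K) :
    ∀ i j : Fin 2, j ≠ i → ∀ x : Fin d → ℝ,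
      (x ⬝ᵥ (K i).mulVec x =
        x ⬝ᵥ (Q i).mulVec x +
          ⨅ u : ℝ, (r * u ^ 2 +
            γ * (((A - vecMulVec (b j) (p j)).mulVec x + u • b i) ⬝ᵥ
              (K i).mulVec ((A - vecMulVec (b j) (p j)).mulVec x + u • b i)))) ∧
      (r * (-(p i ⬝ᵥ x)) ^ 2 +
          γ * (((A - vecMulVec (b j) (p j)).mulVec x + (-(p i ⬝ᵥ x)) • b i) ⬝ᵥ
            (K i).mulVec ((A - vecMulVec (b j) (p j)).mulVec x + (-(p i ⬝ᵥ x)) • b i)) =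
        ⨅ u : ℝ, (r * u ^ 2 +
          γ * (((A - vecMulVec (b j) (p j)).mulVec x + u • b i) ⬝ᵥ
            (K i).mulVec ((A - vecMulVec (b j) (p j)).mulVec x + u • b i)))) ∧
      (∀ u : ℝ, u ≠ -(p i ⬝ᵥ x) →
        r * (-(p i ⬝ᵥ x)) ^ 2 +
            γ * (((A - vecMulVec (b j) (p j)).mulVec x + (-(p i ⬝ᵥ x)) • b i) ⬝ᵥ
              (K i).mulVec ((A - vecMulVec (b j) (p j)).mulVec x + (-(p i ⬝ᵥ x)) • b i)) <
          r * u ^ 2 +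
            γ * (((A - vecMulVec (b j) (p j)).mulVec x + u • b i) ⬝ᵥ
              (K i).mulVec ((A - vecMulVec (b j) (p j)).mulVec x + u • b i))) := by
  obtain ⟨hK, hRic1, hRic2⟩ := hcr
  intro i j hji x
  obtain ⟨hγ0, hγ1⟩ := hγ
  have hKsym : (K i)ᵀ = K i := (hK i).1
  -- symmetry of quadratic form
  have hsym : ∀ a c : Fin d → ℝ, a ⬝ᵥ (K i).mulVec c = c ⬝ᵥ (K i).mulVec a := by
    intro a c
    nth_rewrite 1 [← hKsym]
    rw [dotProduct_mulVec, vecMul_transpose, dotProduct_comm]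
  have hpos : ∀ y : Fin d → ℝ, 0 ≤ y ⬝ᵥ (K i).mulVec y := by
    intro y
    have := (hK i).dotProduct_mulVec_nonneg y
    simpa using this
  set v : Fin d → ℝ := (A - vecMulVec (b j) (p j)).mulVec x with hv
  set s : ℝ := p i ⬝ᵥ x with hs
  set c : ℝ := r + γ * (b i ⬝ᵥ (K i).mulVec (b i)) with hc
  have hcpos : 0 < c := by
    have := hpos (b i)
    nlinarith
  -- key: γ * (b i ⬝ᵥ K v) = c * s
  have hkey : γ * (b i ⬝ᵥ (K i).mulVec v) = c * s := by
    have h1 := congrArg (fun w => w ⬝ᵥ x) (hRic1 i j hji)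
    simp only [smul_dotProduct, add_dotProduct, smul_eq_mul] at h1
    rw [← dotProduct_mulVec, ← dotProduct_mulVec] at h1
    have hve : v = A *ᵥ x - (p j ⬝ᵥ x) • b j := by
      rw [hv, sub_mulVec, myVecMulVec_mulVec]
    rw [hve]
    rw [mulVec_sub, mulVec_smul, dotProduct_sub, dotProduct_smul]
    simp only [smul_eq_mul]
    linear_combination h1
  -- quadratic expansion
  have hexp : ∀ u : ℝ, r * u ^ 2 + γ * ((v + u • b i) ⬝ᵥ (K i).mulVec (v + u • b i)) =
      c * (u + s) ^ 2 + (γ * (v ⬝ᵥ (K i).mulVec v) - c * s ^ 2) := by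
    intro u
    have e1 : (v + u • b i) ⬝ᵥ (K i).mulVec (v + u • b i) =
        v ⬝ᵥ (K i).mulVec v + 2 * u * (b i ⬝ᵥ (K i).mulVec v)
          + u ^ 2 * (b i ⬝ᵥ (K i).mulVec (b i)) := by
      simp only [mulVec_add, mulVec_smul, dotProduct_add, add_dotProduct,
        dotProduct_smul, smul_dotProduct, smul_eq_mul, hsym v (b i)]
      ring
    rw [e1]
    linear_combination 2 * u * hkey - u ^ 2 * hc
  set f : ℝ → ℝ := fun u => r * u ^ 2 + γ * ((v + u • b i) ⬝ᵥ (K i).mulVec (v + u • b i))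
    with hf
  have hmin : ∀ u : ℝ, f (-s) ≤ f u := by
    intro u
    rw [hf]; simp only
    rw [hexp u, hexp (-s)]
    nlinarith [sq_nonneg (u + s), hcpos]
  have hstrict : ∀ u : ℝ, u ≠ -s → f (-s) < f u := by
    intro u hu
    have h0 : u + s ≠ 0 := fun h => hu (by linarith [h] )
    rw [hf]; simp only
    rw [hexp u, hexp (-s)]
    have : 0 < c * (u + s) ^ 2 := by positivity
    nlinarith
  have hinf : (⨅ u : ℝ, f u) = f (-s) := by
    apply le_antisymm
    · exact ciInf_le ⟨f (-s), by rintro y ⟨u, rfl⟩; exact hmin u⟩ (-s)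
    · exact le_ciInf hmin
  -- closed loop matrix
  have hFe : gameF A b p = (A - vecMulVec (b j) (p j)) - vecMulVec (b i) (p i) := by
    fin_cases i <;> fin_cases j <;> first
      | exact absurd rfl hji
      | simp [gameF, sub_right_comm]
  have hFx : (gameF A b p) *ᵥ x = v + (-s) • b i := by
    rw [hFe, sub_mulVec, myVecMulVec_mulVec, ← hv, ← hs]
    simp [sub_eq_add_neg, neg_smul]
  -- Bellman
  have hBell : x ⬝ᵥ (K i).mulVec x = x ⬝ᵥ (Q i).mulVec x + f (-s) := by
    conv_lhs => rw [hRic2 i]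
    rw [add_mulVec, add_mulVec, dotProduct_add, dotProduct_add, smul_mulVec,
      smul_mulVec, dotProduct_smul, dotProduct_smul, myVecMulVec_mulVec,
      dotProduct_smul]
    have h2 : x ⬝ᵥ ((gameF A b p)ᵀ * K i * gameF A b p) *ᵥ x =
        ((gameF A b p) *ᵥ x) ⬝ᵥ (K i).mulVec ((gameF A b p) *ᵥ x) := by
      rw [← mulVec_mulVec, ← mulVec_mulVec, dotProduct_mulVec, vecMul_transpose]
    have hfs : f (-s) = r * (-s) ^ 2 + γ * ((v + (-s) • b i) ⬝ᵥ (K i).mulVec (v + (-s) • b i)) :=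
      rfl
    rw [h2, hFx, hfs, dotProduct_comm x (p i), ← hs]
    simp only [smul_eq_mul]
    ring
  refine ⟨?_, ?_, ?_⟩
  · rw [hBell, hinf]
  · rw [hinf]
  · intro u hu
    exact hstrict u hu


end
end
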